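/- arXiv:2208.01646 — 2 statements merged into one kernel-verified Lean document; each statement's English description precedes it below -/
import Mathlib

section
/- (Lemma on the derivative of the discriminant, first part.) Assume γ is a continuous Lyapunov exponent for the ergodic family H_ω. Then for ℙ-almost every ω: for every ε > 0 there exists q₀ such that for all q > q₀ and all E ∈ K, |Δ'_{ω,q}(E)| ≤ e^{(γ(E)+ε)q}, where Δ'_{ω,q} is the derivative of Δ_{ω,q} with respect to E; equivalently, limsup_{q→∞} sup_{E∈K} (q^{-1}·log|Δ'_{ω,q}(E)| − γ(E)) ≤ 0 almost surely. -/
open MeasureTheory Filter Topology Matrix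

noncomputable section

/-- The one-step transfer matrix `A(t)`, with rows `(t, -1)` and `(1, 0)`. -/
def Astep (t : ℝ) : Matrix (Fin 2) (Fin 2) ℝ := !![t, -1; 1, 0]

/-- The `q`-step transfer matrix `A(E - V (q-1)) ⋯ A(E - V 0)`. -/
def transfer (V : ℕ → ℝ) : ℕ → ℝ → Matrix (Fin 2) (Fin 2) ℝ
  | 0, _ => 1
  | n + 1, E => Astep (E - V n) * transfer V n E

/-- The (ℓ² → ℓ²) operator norm of a 2 × 2 real matrix. -/
def opNorm2 (M : Matrix (Fin 2) (Fin 2) ℝ) : ℝ :=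
  ‖(Matrix.toEuclideanCLM (𝕜 := ℝ) M : EuclideanSpace ℝ (Fin 2) →L[ℝ] EuclideanSpace ℝ (Fin 2))‖

/-- The discriminant `Δ_q(E) = Tr Φ_q(E)`. -/
def disc (V : ℕ → ℝ) (q : ℕ) (E : ℝ) : ℝ := (transfer V q E).trace

/-- `B` is a band of the discriminant `Δ`, i.e. a connected component of `Δ⁻¹([-2,2])`. -/
def IsBand (Δ : ℝ → ℝ) (B : Set ℝ) : Prop :=
  ∃ E₀ ∈ {E : ℝ | Δ E ∈ Set.Icc (-2 : ℝ) 2},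
    B = connectedComponentIn {E : ℝ | Δ E ∈ Set.Icc (-2 : ℝ) 2} E₀

/-- The centre (midpoint) of a band. -/
def bandCentre (B : Set ℝ) : ℝ := (sInf B + sSup B) / 2

/-- The compact interval `K = [-‖f‖_∞ - 12, ‖f‖_∞ + 12]`. -/
def Kset {Ω : Type*} (f : Ω → ℝ) : Set ℝ :=
  Set.Icc (-(⨆ ω, |f ω|) - 12) ((⨆ ω, |f ω|) + 12)

/-- The distance on the discrete circle `ℤ_q`. -/
def cdist (q : ℕ) (x y : ZMod q) : ℕ := min (x - y).val (y - x).val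

/-- The Floquet operator `H_q[κ]` on `ℂ^{ℤ_q}`, as a matrix:
`(H ψ)(x) = e^{iκ} ψ(x-1) + e^{-iκ} ψ(x+1) + V(x) ψ(x)`. -/
def HqM (q : ℕ) [NeZero q] (V : ZMod q → ℝ) (κ : ℝ) : Matrix (ZMod q) (ZMod q) ℂ :=
  fun x y =>
    (if y = x - 1 then Complex.exp (κ * Complex.I) else 0) +
    (if y = x + 1 then Complex.exp (-(κ * Complex.I)) else 0) +
    (if y = x then (V x : ℂ) else 0)

/-- Dirichlet restriction of a matrix on `ℤ_q` to the arc `B_n(x)` of half-length `n`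
centred at `x`. -/
def arcRestrict (q : ℕ) [NeZero q] (M : Matrix (ZMod q) (ZMod q) ℂ) (x : ZMod q) (n : ℕ) :
    Matrix {y : ZMod q // cdist q x y ≤ n} {y : ZMod q // cdist q x y ≤ n} ℂ :=
  M.submatrix Subtype.val Subtype.val

/-- The Green function `(H↾B_n(x) - E)⁻¹` of the arc `B_n(x)`. -/
def greenArc (q : ℕ) [NeZero q] (M : Matrix (ZMod q) (ZMod q) ℂ) (x : ZMod q) (n : ℕ) (E : ℝ) :
    Matrix {y : ZMod q // cdist q x y ≤ n} {y : ZMod q // cdist q x y ≤ n} ℂ :=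
  (arcRestrict q M x n - (E : ℂ) • 1)⁻¹

lemma self_mem_arc (q : ℕ) (x : ZMod q) (n : ℕ) : cdist q x x ≤ n := by
  simp [cdist]

lemma addn_mem_arc (q : ℕ) (x : ZMod q) (n : ℕ) : cdist q x (x + (n : ZMod q)) ≤ n := by
  have h : (x + (n : ZMod q) - x) = (n : ZMod q) := by ring
  calc cdist q x (x + (n : ZMod q)) ≤ ((n : ZMod q)).val := by
        rw [cdist, h]; exact min_le_right _ _
    _ ≤ n := by rw [ZMod.val_natCast]; exact Nat.mod_le _ _

lemma subn_mem_arc (q : ℕ) (x : ZMod q) (n : ℕ) : cdist q x (x - (n : ZMod q)) ≤ n := by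
  have h : (x - (x - (n : ZMod q))) = (n : ZMod q) := by ring
  calc cdist q x (x - (n : ZMod q)) ≤ ((n : ZMod q)).val := by
        rw [cdist, h]; exact min_le_left _ _
    _ ≤ n := by rw [ZMod.val_natCast]; exact Nat.mod_le _ _

/-- A site `x ∈ ℤ_q` is `(E,ε,n)`-non-resonant (for the potential `V` and
Lyapunov exponent `γ`). -/
def NonResonant (q : ℕ) [NeZero q] (V : ZMod q → ℝ) (γ : ℝ → ℝ) (E ε : ℝ) (n : ℕ) (x : ZMod q) : Prop :=
  (E : ℂ) ∉ spectrum ℂ (arcRestrict q (HqM q V 0) x n) ∧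
  ‖greenArc q (HqM q V 0) x n E ⟨x, self_mem_arc q x n⟩
      ⟨x + (n : ZMod q), addn_mem_arc q x n⟩‖ < Real.exp (-(γ E - ε) * n) ∧
  ‖greenArc q (HqM q V 0) x n E ⟨x, self_mem_arc q x n⟩
      ⟨x - (n : ZMod q), subn_mem_arc q x n⟩‖ < Real.exp (-(γ E - ε) * n)

/-- `Q_NR(ε,n,q)`: for every `E ∈ K` the set of `(E,ε,n)`-resonant sites has diameter
at most `2n`. -/
def QNRpot (q : ℕ) [NeZero q] (V : ZMod q → ℝ) (γ : ℝ → ℝ) (K : Set ℝ) (ε : ℝ) (n : ℕ) : Prop :=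
  ∀ E ∈ K, ∀ x y : ZMod q,
    ¬ NonResonant q V γ E ε n x → ¬ NonResonant q V γ E ε n y → cdist q x y ≤ 2 * n

/-- `Q_Sep(ε,q)`: the eigenvalues of `H_q[ω,0]` are simple (the spectrum of the `q × q`
Hermitian matrix has exactly `q` elements) and any two distinct eigenvalues differ by at
least `e^{-εq}`. -/
def QSeppot (q : ℕ) [NeZero q] (V : ZMod q → ℝ) (ε : ℝ) : Prop :=
  (spectrum ℂ (HqM q V 0)).ncard = q ∧
  ∀ E ∈ spectrum ℂ (HqM q V 0), ∀ E' ∈ spectrum ℂ (HqM q V 0), E ≠ E' →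
    Real.exp (-ε * q) ≤ ‖E - E'‖

lemma HqM_isHermitian (q : ℕ) [NeZero q] (V : ZMod q → ℝ) (κ : ℝ) :
    (HqM q V κ).IsHermitian := by
  have hs1 : (starRingEnd ℂ) (Complex.exp (κ * Complex.I)) = Complex.exp (-(κ * Complex.I)) := by
    rw [← Complex.exp_conj]
    congr 1
    simp [_root_.map_mul, Complex.conj_ofReal, Complex.conj_I]
  have hs2 : (starRingEnd ℂ) (Complex.exp (-(κ * Complex.I))) = Complex.exp (κ * Complex.I) := by
    rw [← Complex.exp_conj]
    congr 1
    simp [_root_.map_mul, Complex.conj_ofReal, Complex.conj_I]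
  ext x y
  simp only [HqM, Matrix.conjTranspose_apply, star_add, RCLike.star_def]
  rw [apply_ite (starRingEnd ℂ), apply_ite (starRingEnd ℂ), apply_ite (starRingEnd ℂ)]
  simp only [map_zero, hs1, hs2, Complex.conj_ofReal]
  have e1 : (x = y - 1) = (y = x + 1) := by
    apply propext; constructor <;> intro h <;> subst h <;> ring
  have e2 : (x = y + 1) = (y = x - 1) := by
    apply propext; constructor <;> intro h <;> subst h <;> ring
  have e3 : (x = y) = (y = x) := by
    apply propext; exact eq_comm
  simp only [e1, e2, e3]
  have e4 : (if y = x then ((V y : ℝ) : ℂ) else 0) = (if y = x then ((V x : ℝ) : ℂ) else 0) := by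
    split_ifs with h
    · rw [h]
    · rfl
  rw [e4]
  ring

/-- The eigenvalues of `H_q[κ]`, in nondecreasing order, indexed by `Fin q`. -/
def eigs (q : ℕ) [NeZero q] (V : ZMod q → ℝ) (κ : ℝ) : Fin q → ℝ :=
  let ev : Fin q → ℝ :=
    (HqM_isHermitian q V κ).eigenvalues ∘ (Fintype.equivFinOfCardEq (ZMod.card q)).symm
  ev ∘ Tuple.sort ev

/-- The `M×M` Dirichlet restriction `H↾[0,M-1]`: symmetric tridiagonal matrix with ones
on the off-diagonals and diagonal `V 0, …, V (M-1)`, viewed as acting on `ℂ^M`. -/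
def dirichletM (V : ℕ → ℝ) (M : ℕ) : Matrix (Fin M) (Fin M) ℂ :=
  fun i j => (if (i : ℕ) = (j : ℕ) + 1 ∨ (j : ℕ) = (i : ℕ) + 1 then 1 else 0) +
    (if i = j then ((V i : ℝ) : ℂ) else 0)

/-! ### Auxiliary material for `disc_deriv_bound_ergodic` -/

open scoped Matrix.Norms.L2Operator

section DiscDerivAux

lemma opNorm2_eq_norm (M : Matrix (Fin 2) (Fin 2) ℝ) : opNorm2 M = ‖M‖ := rfl

lemma euclid_coord_le (x : EuclideanSpace ℝ (Fin 2)) (i : Fin 2) : |x i| ≤ ‖x‖ := by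
  rw [EuclideanSpace.norm_eq]
  rw [show |x i| = Real.sqrt (|x i|^2) by rw [Real.sqrt_sq_eq_abs, abs_abs]]
  apply Real.sqrt_le_sqrt
  rw [Fin.sum_univ_two]
  fin_cases i <;> simp [sq_abs] <;> positivity

lemma entry_le_norm (M : Matrix (Fin 2) (Fin 2) ℝ) (i j : Fin 2) : |M i j| ≤ ‖M‖ := by
  have h := ContinuousLinearMap.le_opNorm (Matrix.toEuclideanCLM (𝕜 := ℝ) M)
    (EuclideanSpace.single j 1)
  rw [EuclideanSpace.norm_single, norm_one, mul_one] at h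
  rw [Matrix.cstar_norm_def]
  refine le_trans ?_ h
  have happ : (Matrix.toEuclideanCLM (𝕜 := ℝ) M) (EuclideanSpace.single j 1) =
      (WithLp.equiv 2 _).symm (M.mulVec (Pi.single j 1)) := rfl
  rw [happ]
  have h2 : ((WithLp.equiv 2 (Fin 2 → ℝ)).symm (M.mulVec (Pi.single j 1))) i = M i j := by
    simp [Matrix.mulVec_single]
  calc |M i j| = |((WithLp.equiv 2 (Fin 2 → ℝ)).symm (M.mulVec (Pi.single j 1))) i| := by rw [h2]
    _ ≤ _ := euclid_coord_le _ i

lemma norm_le_sum_abs (M : Matrix (Fin 2) (Fin 2) ℝ) :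
    ‖M‖ ≤ |M 0 0| + |M 0 1| + |M 1 0| + |M 1 1| := by
  rw [Matrix.cstar_norm_def]
  apply ContinuousLinearMap.opNorm_le_bound _ (by positivity)
  intro x
  have happ : (Matrix.toEuclideanCLM (𝕜 := ℝ) M) x =
      (WithLp.equiv 2 _).symm (M.mulVec (WithLp.equiv 2 _ x)) := rfl
  rw [happ]
  set y := (WithLp.equiv 2 (Fin 2 → ℝ)).symm (M.mulVec (WithLp.equiv 2 _ x)) with hy
  have hcoord : ∀ i : Fin 2, |y i| ≤ (|M i 0| + |M i 1|) * ‖x‖ := by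
    intro i
    have h1 : y i = M i 0 * x 0 + M i 1 * x 1 := by
      show (M.mulVec (WithLp.equiv 2 _ x)) i = _
      simp [Matrix.mulVec, dotProduct, Fin.sum_univ_two]
    rw [h1]
    have e0 := euclid_coord_le x 0
    have e1 := euclid_coord_le x 1
    have a0 := abs_nonneg (M i 0)
    have a1 := abs_nonneg (M i 1)
    calc |M i 0 * x 0 + M i 1 * x 1| ≤ |M i 0| * |x 0| + |M i 1| * |x 1| := by
          refine le_trans (abs_add_le _ _) ?_; rw [abs_mul, abs_mul]
      _ ≤ (|M i 0| + |M i 1|) * ‖x‖ := by nlinarith [abs_nonneg (x 0), abs_nonneg (x 1)]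
  have hny : ‖y‖ ≤ |y 0| + |y 1| := by
    rw [EuclideanSpace.norm_eq, Fin.sum_univ_two]
    rw [show |y 0| + |y 1| = Real.sqrt ((|y 0| + |y 1|)^2) by rw [Real.sqrt_sq (by positivity)]]
    apply Real.sqrt_le_sqrt
    simp only [Real.norm_eq_abs]
    nlinarith [abs_nonneg (y 0), abs_nonneg (y 1), sq_abs (y 0), sq_abs (y 1)]
  calc ‖y‖ ≤ |y 0| + |y 1| := hny
    _ ≤ (|M 0 0| + |M 0 1|) * ‖x‖ + (|M 1 0| + |M 1 1|) * ‖x‖ := add_le_add (hcoord 0) (hcoord 1)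
    _ = (|M 0 0| + |M 0 1| + |M 1 0| + |M 1 1|) * ‖x‖ := by ring

/-- shifted potential -/
def shiftN (a : ℕ) (V : ℕ → ℝ) : ℕ → ℝ := fun k => V (k + a)

lemma transfer_succ (V : ℕ → ℝ) (n : ℕ) (E : ℝ) :
    transfer V (n+1) E = Astep (E - V n) * transfer V n E := rfl

lemma transfer_add (V : ℕ → ℝ) (a b : ℕ) (E : ℝ) :
    transfer V (a + b) E = transfer (shiftN a V) b E * transfer V a E := by
  induction b with
  | zero => simp [transfer]
  | succ b ih =>
      have h : a + (b+1) = (a+b)+1 := rfl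
      rw [h, transfer_succ, ih, transfer_succ, mul_assoc,
        show V (a + b) = shiftN a V b from by simp [shiftN, Nat.add_comm]]

lemma shiftN_shiftN (a b : ℕ) (V : ℕ → ℝ) : shiftN a (shiftN b V) = shiftN (a + b) V := by
  funext k; simp [shiftN, Nat.add_assoc]

lemma det_Astep (t : ℝ) : (Astep t).det = 1 := by
  simp [Astep, Matrix.det_fin_two_of]

lemma det_transfer (V : ℕ → ℝ) (n : ℕ) (E : ℝ) : (transfer V n E).det = 1 := by
  induction n with
  | zero => simp [transfer]
  | succ n ih => rw [transfer_succ, Matrix.det_mul, det_Astep, ih, one_mul]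

lemma half_le_norm_of_det_one (M : Matrix (Fin 2) (Fin 2) ℝ) (h : M.det = 1) :
    (1:ℝ)/2 ≤ ‖M‖ := by
  have hdet : M 0 0 * M 1 1 - M 0 1 * M 1 0 = 1 := by
    rw [← Matrix.det_fin_two M]; exact h
  have e00 := entry_le_norm M 0 0
  have e01 := entry_le_norm M 0 1
  have e10 := entry_le_norm M 1 0
  have e11 := entry_le_norm M 1 1
  have h1 : (1:ℝ) ≤ 2 * ‖M‖^2 := by
    have h2 : (1:ℝ) = |M 0 0 * M 1 1 - M 0 1 * M 1 0| := by rw [hdet]; simp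
    rw [h2]
    have habs : |M 0 0 * M 1 1 - M 0 1 * M 1 0| ≤ |M 0 0| * |M 1 1| + |M 0 1| * |M 1 0| := by
      refine le_trans (abs_sub _ _) ?_; rw [abs_mul, abs_mul]
    nlinarith [abs_nonneg (M 0 0), abs_nonneg (M 0 1), abs_nonneg (M 1 0), abs_nonneg (M 1 1),
      norm_nonneg M]
  nlinarith [norm_nonneg M, sq_nonneg (2*‖M‖ - 1)]

lemma half_le_norm_transfer (V : ℕ → ℝ) (n : ℕ) (E : ℝ) :
    (1:ℝ)/2 ≤ ‖transfer V n E‖ := half_le_norm_of_det_one _ (det_transfer V n E)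

lemma norm_Astep_le (t : ℝ) : ‖Astep t‖ ≤ |t| + 2 := by
  refine le_trans (norm_le_sum_abs _) ?_
  simp [Astep]
  linarith [abs_nonneg t]

/-- the matrix `E00 = dA(t)/dt` -/
def E00 : Matrix (Fin 2) (Fin 2) ℝ := !![1, 0; 0, 0]

/-- the matrix `J` -/
def Jmat : Matrix (Fin 2) (Fin 2) ℝ := !![0, -1; 1, 0]

lemma norm_E00_le : ‖E00‖ ≤ 1 := by
  refine le_trans (norm_le_sum_abs _) ?_
  simp [E00]

lemma Astep_sub_Astep (t s : ℝ) : Astep t - Astep s = (t - s) • E00 := by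
  ext i j
  fin_cases i <;> fin_cases j <;> simp [Astep, E00]

lemma norm_Astep_sub_le (t s : ℝ) : ‖Astep t - Astep s‖ ≤ |t - s| := by
  rw [Astep_sub_Astep]
  refine le_trans (norm_smul_le _ _) ?_
  rw [Real.norm_eq_abs]
  nlinarith [norm_E00_le, abs_nonneg (t-s), norm_nonneg E00]

/-! #### Measurability -/

lemma continuous_opNorm2_of : Continuous fun M : Fin 2 → Fin 2 → ℝ => opNorm2 (Matrix.of M) := by
  have h : Continuous fun M : Fin 2 → Fin 2 → ℝ =>
      ((((Matrix.toEuclideanLin (𝕜 := ℝ) (m := Fin 2) (n := Fin 2)).trans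
        LinearMap.toContinuousLinearMap).toLinearMap.comp
        (Matrix.ofLinearEquiv ℝ).toLinearMap) M :
        EuclideanSpace ℝ (Fin 2) →L[ℝ] EuclideanSpace ℝ (Fin 2)) :=
    LinearMap.continuous_of_finiteDimensional _
  exact continuous_norm.comp h

lemma measurable_transfer_entry {Ω : Type*} [MeasurableSpace Ω] (V : Ω → ℕ → ℝ)
    (hV : ∀ k, Measurable fun ω => V ω k) (m : ℕ) (E : ℝ) (i j : Fin 2) :
    Measurable fun ω => transfer (V ω) m E i j := by
  induction m generalizing i j with
  | zero => simp [transfer]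
  | succ n ih =>
      have hmul : ∀ ω, (transfer (V ω) (n+1) E) i j =
          Astep (E - V ω n) i 0 * transfer (V ω) n E 0 j +
          Astep (E - V ω n) i 1 * transfer (V ω) n E 1 j := by
        intro ω
        show (Astep (E - V ω n) * transfer (V ω) n E) i j = _
        rw [Matrix.mul_apply, Fin.sum_univ_two]
      simp only [hmul]
      have hA : ∀ k : Fin 2, Measurable fun ω => Astep (E - V ω n) i k := by
        intro k
        fin_cases i <;> fin_cases k <;> simp [Astep] <;>
          first
            | exact (measurable_const.sub (hV n)).neg
            | exact measurable_const
            | exact measurable_const.sub (hV n)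
      exact ((hA 0).mul (ih 0 j)).add ((hA 1).mul (ih 1 j))

lemma measurable_opNorm2_transfer {Ω : Type*} [MeasurableSpace Ω] (V : Ω → ℕ → ℝ)
    (hV : ∀ k, Measurable fun ω => V ω k) (m : ℕ) (E : ℝ) :
    Measurable fun ω => opNorm2 (transfer (V ω) m E) := by
  have hg : Measurable fun ω => (fun i j => transfer (V ω) m E i j : Fin 2 → Fin 2 → ℝ) := by
    apply measurable_pi_lambda
    intro i
    apply measurable_pi_lambda
    intro j
    exact measurable_transfer_entry V hV m E i j
  have h : (fun ω => opNorm2 (transfer (V ω) m E)) =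
      (fun M : Fin 2 → Fin 2 → ℝ => opNorm2 (Matrix.of M)) ∘
        (fun ω => (fun i j => transfer (V ω) m E i j)) := rfl
  rw [h]
  exact continuous_opNorm2_of.measurable.comp hg

/-! #### The derivative of the discriminant -/

/-- derivative of the transfer matrix in `E` -/
def dtransfer (V : ℕ → ℝ) (n : ℕ) (E : ℝ) : Matrix (Fin 2) (Fin 2) ℝ :=
  ∑ j ∈ Finset.range n, transfer (shiftN (j+1) V) (n - (j+1)) E * (E00 * transfer V j E)

lemma Astep_eq (t : ℝ) : Astep t = t • E00 + Jmat := by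
  ext i j; fin_cases i <;> fin_cases j <;> simp [Astep, E00, Jmat]

lemma dtransfer_succ (V : ℕ → ℝ) (n : ℕ) (E : ℝ) :
    dtransfer V (n+1) E = E00 * transfer V n E + Astep (E - V n) * dtransfer V n E := by
  unfold dtransfer
  rw [Finset.sum_range_succ]
  have hlast : transfer (shiftN (n+1) V) ((n+1) - (n+1)) E * (E00 * transfer V n E) =
      E00 * transfer V n E := by
    simp [transfer]
  rw [hlast, Finset.mul_sum, add_comm]
  congr 1
  apply Finset.sum_congr rfl
  intro j hj
  have hjn : j + 1 ≤ n := Finset.mem_range.mp hj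
  have h1 : (n+1) - (j+1) = (n - (j+1)) + 1 := by omega
  rw [h1, transfer_succ]
  have h2 : shiftN (j+1) V (n - (j+1)) = V n := by
    simp [shiftN]; congr 1; omega
  rw [h2, mul_assoc]

lemma hasDerivAt_transfer (V : ℕ → ℝ) (n : ℕ) (E : ℝ) :
    HasDerivAt (fun E' => transfer V n E') (dtransfer V n E) E := by
  induction n with
  | zero =>
      have h : dtransfer V 0 E = 0 := by simp [dtransfer]
      rw [h]
      exact hasDerivAt_const E _
  | succ n ih =>
      have hA : HasDerivAt (fun E' => Astep (E' - V n)) E00 E := by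
        have h1 : HasDerivAt (fun E' : ℝ => (E' - V n) • E00 + Jmat) ((1:ℝ) • E00) E :=
          (((hasDerivAt_id E).sub_const (V n)).smul_const E00).add_const Jmat
        simpa [Astep_eq, one_smul] using h1
      have h := hA.mul ih
      rw [show (fun E' => transfer V (n+1) E') = fun E' => Astep (E' - V n) * transfer V n E'
        from rfl, dtransfer_succ]
      exact h

lemma trace_abs_le (M : Matrix (Fin 2) (Fin 2) ℝ) : |M.trace| ≤ 2 * ‖M‖ := by
  rw [Matrix.trace_fin_two]
  calc |M 0 0 + M 1 1| ≤ |M 0 0| + |M 1 1| := abs_add_le _ _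
    _ ≤ 2 * ‖M‖ := by linarith [entry_le_norm M 0 0, entry_le_norm M 1 1]

lemma hasDerivAt_disc (V : ℕ → ℝ) (q : ℕ) (E : ℝ) :
    HasDerivAt (fun E' => disc V q E') ((dtransfer V q E).trace) E := by
  have hT := hasDerivAt_transfer V q E
  have hL := (LinearMap.toContinuousLinearMap
    (Matrix.traceLinearMap (Fin 2) ℝ ℝ)).hasFDerivAt (x := transfer V q E)
  have h := hL.comp_hasDerivAt E hT
  exact h

lemma deriv_disc (V : ℕ → ℝ) (q : ℕ) (E : ℝ) :
    deriv (fun E' => disc V q E') E = (dtransfer V q E).trace :=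
  (hasDerivAt_disc V q E).deriv

/-! #### norm estimates for transfer matrices -/

lemma norm_transfer_le (V : ℕ → ℝ) (n : ℕ) (E R : ℝ) (hR : 1 ≤ R)
    (h1 : ∀ s, ‖Astep (E - V s)‖ ≤ R) : ‖transfer V n E‖ ≤ R ^ n := by
  induction n with
  | zero => rw [show transfer V 0 E = 1 from rfl, norm_one, pow_zero]
  | succ n ih =>
      rw [transfer_succ, pow_succ]
      calc ‖Astep (E - V n) * transfer V n E‖ ≤ ‖Astep (E - V n)‖ * ‖transfer V n E‖ :=
            norm_mul_le _ _
        _ ≤ R * R ^ n := mul_le_mul (h1 n) ih (norm_nonneg _) (by linarith)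
        _ = R ^ n * R := by ring

lemma norm_transfer_sub_le (V : ℕ → ℝ) (n : ℕ) (E E' R : ℝ) (hR : 1 ≤ R)
    (h1 : ∀ s, ‖Astep (E - V s)‖ ≤ R) (h1' : ∀ s, ‖Astep (E' - V s)‖ ≤ R) :
    ‖transfer V n E - transfer V n E'‖ ≤ n * R ^ n * |E - E'| := by
  have hRn : ∀ k : ℕ, (0:ℝ) ≤ R ^ k := fun k => pow_nonneg (by linarith) k
  induction n with
  | zero => simp [transfer]
  | succ n ih =>
      have hsplit : transfer V (n+1) E - transfer V (n+1) E' =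
          (Astep (E - V n) - Astep (E' - V n)) * transfer V n E +
            Astep (E' - V n) * (transfer V n E - transfer V n E') := by
        rw [transfer_succ, transfer_succ, sub_mul, mul_sub]
        abel
      rw [hsplit]
      have hA : ‖Astep (E - V n) - Astep (E' - V n)‖ ≤ |E - E'| := by
        have h := norm_Astep_sub_le (E - V n) (E' - V n)
        simpa using h
      calc ‖(Astep (E - V n) - Astep (E' - V n)) * transfer V n E +
            Astep (E' - V n) * (transfer V n E - transfer V n E')‖
          ≤ ‖(Astep (E - V n) - Astep (E' - V n)) * transfer V n E‖ +
            ‖Astep (E' - V n) * (transfer V n E - transfer V n E')‖ := norm_add_le _ _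
        _ ≤ ‖Astep (E - V n) - Astep (E' - V n)‖ * ‖transfer V n E‖ +
            ‖Astep (E' - V n)‖ * ‖transfer V n E - transfer V n E'‖ :=
            add_le_add (norm_mul_le _ _) (norm_mul_le _ _)
        _ ≤ |E - E'| * R ^ n + R * (n * R ^ n * |E - E'|) := by
            apply add_le_add
            · exact mul_le_mul hA (norm_transfer_le V n E R hR h1) (norm_nonneg _)
                (abs_nonneg _)
            · exact mul_le_mul (h1' n) ih (norm_nonneg _) (by linarith)
        _ ≤ (n+1:ℕ) * R ^ (n+1) * |E - E'| := by
            have h2 : R ^ n ≤ R ^ (n+1) := by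
              calc R ^ n = R ^ n * 1 := by ring
                _ ≤ R ^ n * R := by nlinarith [hRn n]
                _ = R ^ (n+1) := by rw [pow_succ]
            have h4 : |E - E'| * R ^ n ≤ |E - E'| * R ^ (n+1) :=
              mul_le_mul_of_nonneg_left h2 (abs_nonneg _)
            have h5 : R * ((n:ℝ) * R ^ n * |E - E'|) = (n:ℝ) * R ^ (n+1) * |E - E'| := by
              rw [pow_succ]; ring
            push_cast
            linarith [h4, h5]

lemma norm_dtransfer_le (V : ℕ → ℝ) (q : ℕ) (E : ℝ) :
    ‖dtransfer V q E‖ ≤ ∑ j ∈ Finset.range q,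
      ‖transfer (shiftN (j+1) V) (q - (j+1)) E‖ * ‖transfer V j E‖ := by
  refine le_trans (norm_sum_le _ _) (Finset.sum_le_sum fun j _ => ?_)
  calc ‖transfer (shiftN (j+1) V) (q - (j+1)) E * (E00 * transfer V j E)‖
      ≤ ‖transfer (shiftN (j+1) V) (q - (j+1)) E‖ * ‖E00 * transfer V j E‖ := norm_mul_le _ _
    _ ≤ ‖transfer (shiftN (j+1) V) (q - (j+1)) E‖ * (‖E00‖ * ‖transfer V j E‖) := by
        apply mul_le_mul_of_nonneg_left (norm_mul_le _ _) (norm_nonneg _)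
    _ ≤ ‖transfer (shiftN (j+1) V) (q - (j+1)) E‖ * ‖transfer V j E‖ := by
        apply mul_le_mul_of_nonneg_left _ (norm_nonneg _)
        nlinarith [norm_E00_le, norm_nonneg (transfer V j E), norm_nonneg E00]

/-! #### log-subadditivity and block decomposition -/

lemma log1p_le_log1p_add {x y d : ℝ} (hx : 0 ≤ x) (hy : 0 ≤ y) (hd : 0 ≤ d) (hxy : x ≤ y + d) :
    Real.log (x + 1) ≤ Real.log (y + 1) + d := by
  have ha : (0:ℝ) < y + 1 := by linarith
  have h1 : Real.log (x + 1) ≤ Real.log (y + d + 1) := by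
    apply Real.log_le_log (by linarith) (by linarith)
  have h2 : Real.log (y + d + 1) - Real.log (y + 1) ≤ d := by
    have hpos : (0:ℝ) < (y + d + 1) / (y + 1) := by positivity
    have h3 := Real.log_le_sub_one_of_pos hpos
    rw [Real.log_div (by linarith) (by linarith)] at h3
    have h4 : (y + d + 1) / (y + 1) - 1 = d / (y + 1) := by field_simp; ring
    have h5 : d / (y + 1) ≤ d := by
      apply div_le_self hd; linarith
    linarith
  linarith

lemma log_norm_mul_le (M N : Matrix (Fin 2) (Fin 2) ℝ) :
    Real.log (‖M * N‖ + 1) ≤ Real.log (‖M‖ + 1) + Real.log (‖N‖ + 1) := by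
  have h1 : ‖M * N‖ + 1 ≤ (‖M‖ + 1) * (‖N‖ + 1) := by
    have h := norm_mul_le M N
    nlinarith [norm_nonneg M, norm_nonneg N]
  calc Real.log (‖M * N‖ + 1) ≤ Real.log ((‖M‖ + 1) * (‖N‖ + 1)) :=
        Real.log_le_log (by positivity) h1
    _ = Real.log (‖M‖ + 1) + Real.log (‖N‖ + 1) := by
        rw [Real.log_mul (by positivity) (by positivity)]

lemma log_norm_transfer_nonneg (V : ℕ → ℝ) (n : ℕ) (E : ℝ) :
    0 ≤ Real.log (‖transfer V n E‖ + 1) :=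
  Real.log_nonneg (by linarith [norm_nonneg (transfer V n E)])

lemma log_transfer_split (V : ℕ → ℝ) (a b : ℕ) (E : ℝ) :
    Real.log (‖transfer V (a + b) E‖ + 1) ≤
      Real.log (‖transfer V a E‖ + 1) + Real.log (‖transfer (shiftN a V) b E‖ + 1) := by
  rw [transfer_add]
  calc Real.log (‖transfer (shiftN a V) b E * transfer V a E‖ + 1) ≤
        Real.log (‖transfer (shiftN a V) b E‖ + 1) + Real.log (‖transfer V a E‖ + 1) :=
        log_norm_mul_le _ _
    _ = _ := by ring

lemma log_transfer_le_linear (W : ℕ → ℝ) (n : ℕ) (E R : ℝ) (hR : 1 ≤ R)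
    (h1 : ∀ s, ‖Astep (E - W s)‖ ≤ R) :
    Real.log (‖transfer W n E‖ + 1) ≤ n * Real.log (R + 1) + Real.log 2 := by
  induction n with
  | zero =>
      simp only [transfer, Nat.cast_zero, zero_mul, zero_add]
      rw [norm_one]
      norm_num
  | succ n ih =>
      rw [transfer_succ]
      calc Real.log (‖Astep (E - W n) * transfer W n E‖ + 1) ≤
            Real.log (‖Astep (E - W n)‖ + 1) + Real.log (‖transfer W n E‖ + 1) :=
            log_norm_mul_le _ _
        _ ≤ Real.log (R + 1) + (n * Real.log (R + 1) + Real.log 2) := by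
            apply add_le_add _ ih
            apply Real.log_le_log (by positivity)
            linarith [h1 n]
        _ = (n + 1 : ℕ) * Real.log (R + 1) + Real.log 2 := by push_cast; ring

lemma log_transfer_blocks (V : ℕ → ℝ) (m k t : ℕ) (E : ℝ) :
    Real.log (‖transfer (shiftN t V) (k * m) E‖ + 1) ≤
      (∑ i ∈ Finset.range k, Real.log (‖transfer (shiftN (t + i * m) V) m E‖ + 1)) +
        Real.log 2 := by
  induction k with
  | zero =>
      simp only [zero_mul, Finset.range_zero, Finset.sum_empty, zero_add, transfer]
      rw [norm_one]
      norm_num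
  | succ k ih =>
      have hsm : (k + 1) * m = k * m + m := by ring
      rw [hsm]
      calc Real.log (‖transfer (shiftN t V) (k * m + m) E‖ + 1) ≤
            Real.log (‖transfer (shiftN t V) (k * m) E‖ + 1) +
              Real.log (‖transfer (shiftN (k * m) (shiftN t V)) m E‖ + 1) :=
            log_transfer_split _ _ _ _
        _ ≤ ((∑ i ∈ Finset.range k, Real.log (‖transfer (shiftN (t + i * m) V) m E‖ + 1)) +
              Real.log 2) + Real.log (‖transfer (shiftN (t + k * m) V) m E‖ + 1) := by
            apply add_le_add ih
            rw [shiftN_shiftN, Nat.add_comm (k*m) t]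
        _ = _ := by rw [Finset.sum_range_succ]; ring

lemma log_transfer_offset (V : ℕ → ℝ) (m n t : ℕ) (E R : ℝ) (hm : 1 ≤ m) (ht : t < m)
    (hR : 1 ≤ R) (h1 : ∀ s, ‖Astep (E - V s)‖ ≤ R) :
    Real.log (‖transfer V n E‖ + 1) ≤
      (∑ i ∈ Finset.range ((n - t) / m),
        Real.log (‖transfer (shiftN (t + i * m) V) m E‖ + 1)) +
        (2 * m * Real.log (R + 1) + 3 * Real.log 2) := by
  have hlogR : 0 ≤ Real.log (R + 1) := Real.log_nonneg (by linarith)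
  have hlog2 : 0 ≤ Real.log 2 := Real.log_nonneg (by norm_num)
  have hsumnn : 0 ≤ ∑ i ∈ Finset.range ((n - t) / m),
      Real.log (‖transfer (shiftN (t + i * m) V) m E‖ + 1) :=
    Finset.sum_nonneg fun i _ => log_norm_transfer_nonneg _ _ _
  rcases Nat.lt_or_ge n t with hnt | hnt
  · have h := log_transfer_le_linear V n E R hR h1
    have hnm : (n:ℝ) ≤ m := by exact_mod_cast le_of_lt (lt_trans hnt ht)
    nlinarith [mul_le_mul_of_nonneg_right hnm hlogR]
  · set k := (n - t) / m with hk
    set r := (n - t) % m with hr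
    have hdm : n = t + (k * m + r) := by
      have h := Nat.div_add_mod (n - t) m
      have h2 : k * m + r = n - t := by rw [hk, hr, Nat.mul_comm]; exact h
      rw [h2]
      exact (Nat.add_sub_cancel' hnt).symm
    have h1' : Real.log (‖transfer V n E‖ + 1) ≤
        Real.log (‖transfer V t E‖ + 1) +
          Real.log (‖transfer (shiftN t V) (k * m + r) E‖ + 1) := by
      conv_lhs => rw [hdm]
      exact log_transfer_split _ _ _ _
    have h2' : Real.log (‖transfer (shiftN t V) (k * m + r) E‖ + 1) ≤
        Real.log (‖transfer (shiftN t V) (k * m) E‖ + 1) +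
          Real.log (‖transfer (shiftN (k * m) (shiftN t V)) r E‖ + 1) :=
      log_transfer_split _ _ _ _
    have h3' := log_transfer_blocks V m k t E
    have h4' : Real.log (‖transfer V t E‖ + 1) ≤ t * Real.log (R + 1) + Real.log 2 :=
      log_transfer_le_linear V t E R hR h1
    have h5' : Real.log (‖transfer (shiftN (k * m) (shiftN t V)) r E‖ + 1) ≤
        r * Real.log (R + 1) + Real.log 2 := by
      rw [shiftN_shiftN]
      apply log_transfer_le_linear _ r E R hR
      intro s
      exact h1 _
    have hrm : r < m := Nat.mod_lt _ (by omega)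
    have htR : (t:ℝ) * Real.log (R+1) ≤ m * Real.log (R+1) := by
      apply mul_le_mul_of_nonneg_right _ hlogR
      exact_mod_cast le_of_lt ht
    have hrR : (r:ℝ) * Real.log (R+1) ≤ m * Real.log (R+1) := by
      apply mul_le_mul_of_nonneg_right _ hlogR
      exact_mod_cast le_of_lt hrm
    linarith

lemma log_transfer_avg (V : ℕ → ℝ) (m n : ℕ) (E R : ℝ) (hm : 1 ≤ m)
    (hR : 1 ≤ R) (h1 : ∀ s, ‖Astep (E - V s)‖ ≤ R) :
    (m:ℝ) * Real.log (‖transfer V n E‖ + 1) ≤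
      (∑ s ∈ Finset.range n, Real.log (‖transfer (shiftN s V) m E‖ + 1)) +
        m * (2 * m * Real.log (R + 1) + 3 * Real.log 2) := by
  have key : ∑ t ∈ Finset.range m, ((∑ i ∈ Finset.range ((n - t) / m),
        Real.log (‖transfer (shiftN (t + i * m) V) m E‖ + 1)) +
        (2 * m * Real.log (R + 1) + 3 * Real.log 2)) ≥
      (m:ℝ) * Real.log (‖transfer V n E‖ + 1) := by
    rw [ge_iff_le]
    calc (m:ℝ) * Real.log (‖transfer V n E‖ + 1)
        = ∑ _t ∈ Finset.range m, Real.log (‖transfer V n E‖ + 1) := by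
          rw [Finset.sum_const, Finset.card_range, nsmul_eq_mul]
      _ ≤ _ := Finset.sum_le_sum fun t htm =>
          log_transfer_offset V m n t E R hm (Finset.mem_range.mp htm) hR h1
  rw [Finset.sum_add_distrib, Finset.sum_const, Finset.card_range, nsmul_eq_mul] at key
  have hdouble : ∑ t ∈ Finset.range m, (∑ i ∈ Finset.range ((n - t) / m),
        Real.log (‖transfer (shiftN (t + i * m) V) m E‖ + 1)) ≤
      ∑ s ∈ Finset.range n, Real.log (‖transfer (shiftN s V) m E‖ + 1) := by
    rw [Finset.sum_sigma']
    set F : (Σ _t : ℕ, ℕ) → ℕ := fun p => p.1 + p.2 * m with hF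
    set S := (Finset.range m).sigma (fun t => Finset.range ((n - t) / m)) with hS
    have hinj : ∀ p ∈ S, ∀ q ∈ S, F p = F q → p = q := by
      intro p hp q hq hFeq
      simp only [hS, Finset.mem_sigma, Finset.mem_range] at hp hq
      have h1p : p.1 < m := hp.1
      have h1q : q.1 < m := hq.1
      simp only [hF] at hFeq
      have heq1 : p.1 = q.1 := by
        have e1 : (p.1 + p.2 * m) % m = p.1 := by
          rw [Nat.add_mul_mod_self_right, Nat.mod_eq_of_lt h1p]
        have e2 : (q.1 + q.2 * m) % m = q.1 := by
          rw [Nat.add_mul_mod_self_right, Nat.mod_eq_of_lt h1q]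
        rw [← e1, ← e2, hFeq]
      have heq2 : p.2 = q.2 := by
        have hmm : p.2 * m = q.2 * m := by omega
        exact Nat.eq_of_mul_eq_mul_right (by omega) hmm
      exact Sigma.ext heq1 (heq_of_eq heq2)
    have himg : ∀ p ∈ S, F p ∈ Finset.range n := by
      intro p hp
      simp only [hS, Finset.mem_sigma, Finset.mem_range] at hp
      rw [Finset.mem_range]
      have h2 : p.2 < (n - p.1) / m := hp.2
      have h3 : p.2 * m + m ≤ n - p.1 := by
        have h3' : (p.2 + 1) * m ≤ n - p.1 := by
          rw [← Nat.le_div_iff_mul_le (by omega)]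
          omega
        rw [add_mul, one_mul] at h3'
        exact h3'
      simp only [hF]
      omega
    calc ∑ p ∈ S, Real.log (‖transfer (shiftN (F p) V) m E‖ + 1)
        = ∑ s ∈ S.image F, Real.log (‖transfer (shiftN s V) m E‖ + 1) :=
          (Finset.sum_image (f := fun s => Real.log (‖transfer (shiftN s V) m E‖ + 1))
            (fun p hp q hq h => hinj p hp q hq h)).symm
      _ ≤ ∑ s ∈ Finset.range n, Real.log (‖transfer (shiftN s V) m E‖ + 1) := by
          apply Finset.sum_le_sum_of_subset_of_nonneg
          · intro s hs
            obtain ⟨p, hp, rfl⟩ := Finset.mem_image.mp hs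
            exact himg p hp
          · intro s _ _
            exact log_norm_transfer_nonneg _ _ _
  linarith

lemma sum_split_le (h : ℕ → ℝ) (hnn : ∀ s, 0 ≤ h s) {j q : ℕ} (hj : j < q) :
    (∑ s ∈ Finset.range j, h s) + (∑ s ∈ Finset.range (q - (j+1)), h (s + (j+1))) ≤
      ∑ s ∈ Finset.range q, h s := by
  have h2 : (∑ s ∈ Finset.range (q - (j+1)), h (s + (j+1))) =
      ∑ s ∈ Finset.Ico (j+1) q, h s := by
    rw [Finset.sum_Ico_eq_sum_range]
    apply Finset.sum_congr rfl
    intro s _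
    rw [Nat.add_comm]
  rw [h2]
  have h3 : Finset.range j = Finset.Ico 0 j := by rw [Finset.range_eq_Ico]
  rw [h3]
  have hdisj : Disjoint (Finset.Ico 0 j) (Finset.Ico (j+1) q) := by
    apply Finset.Ico_disjoint_Ico_consecutive 0 j q |>.mono_right
    apply Finset.Ico_subset_Ico_left
    omega
  rw [← Finset.sum_union hdisj]
  apply Finset.sum_le_sum_of_subset_of_nonneg
  · intro s hs
    rcases Finset.mem_union.mp hs with h | h <;>
      · rw [Finset.mem_range]
        have := Finset.mem_Ico.mp h
        omega
  · intro s _ _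
    exact hnn s

lemma log1p_le_log_add_log3 {x : ℝ} (hx : 1/2 ≤ x) :
    Real.log (x + 1) ≤ Real.log x + Real.log 3 := by
  have h1 : x + 1 ≤ 3 * x := by linarith
  calc Real.log (x + 1) ≤ Real.log (3 * x) := Real.log_le_log (by linarith) h1
    _ = Real.log 3 + Real.log x := Real.log_mul (by norm_num) (by linarith)
    _ = _ := by ring

lemma abs_log_le {x : ℝ} (hlow : 1/2 ≤ x) {B : ℝ} (hB0 : 0 ≤ B) (hB : Real.log x ≤ B) :
    |Real.log x| ≤ B + Real.log 2 := by
  rcases abs_cases (Real.log x) with ⟨h1, _⟩ | ⟨h1, _⟩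
  · have h : (0:ℝ) ≤ Real.log 2 := Real.log_nonneg (by norm_num)
    linarith
  · rw [h1]
    have h2 : Real.log (1/2) ≤ Real.log x := Real.log_le_log (by norm_num) hlow
    rw [show (1/2 : ℝ) = 2⁻¹ by norm_num, Real.log_inv] at h2
    linarith

end DiscDerivAux

/-! #### Ergodic-theoretic part -/

section ErgodicAux

/-- Birkhoff sums. -/
def bSum {Ω : Type*} (T : Ω → Ω) (g : Ω → ℝ) (n : ℕ) (ω : Ω) : ℝ :=
  ∑ j ∈ Finset.range n, g (T^[j] ω)

/-- running maximum of Birkhoff sums -/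
def maxS {Ω : Type*} (T : Ω → Ω) (g : Ω → ℝ) : ℕ → Ω → ℝ
  | 0 => fun _ => 0
  | N + 1 => fun ω => max (maxS T g N ω) (bSum T g (N+1) ω)

set_option linter.unusedSectionVars false

variable {Ω : Type*} [MeasurableSpace Ω] {ℙ : Measure Ω} [IsProbabilityMeasure ℙ]
variable {T : Ω → Ω} {g : Ω → ℝ}

lemma bSum_succ' (n : ℕ) (ω : Ω) : bSum T g (n+1) ω = g ω + bSum T g n (T ω) := by
  unfold bSum
  rw [Finset.sum_range_succ']
  simp only [Function.iterate_succ_apply, Function.iterate_zero_apply]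
  rw [add_comm]

lemma maxS_nonneg (N : ℕ) (ω : Ω) : 0 ≤ maxS T g N ω := by
  induction N with
  | zero => simp [maxS]
  | succ N ih => exact le_trans ih (le_max_left _ _)

lemma maxS_mono (N : ℕ) (ω : Ω) : maxS T g N ω ≤ maxS T g (N+1) ω := le_max_left _ _

lemma bSum_le_maxS {n N : ℕ} (hn : n ≤ N) (ω : Ω) : bSum T g n ω ≤ maxS T g N ω := by
  induction N with
  | zero =>
      have h : n = 0 := Nat.le_zero.mp hn
      subst h; simp [bSum, maxS]
  | succ N ih =>
      rcases Nat.lt_or_ge n (N+1) with h | h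
      · exact le_trans (ih (Nat.lt_succ_iff.mp h)) (le_max_left _ _)
      · have h2 : n = N + 1 := le_antisymm hn h
        subst h2; exact le_max_right _ _

lemma maxS_cases (N : ℕ) (ω : Ω) :
    maxS T g N ω = 0 ∨ ∃ n, 1 ≤ n ∧ n ≤ N ∧ maxS T g N ω = bSum T g n ω := by
  induction N with
  | zero => left; rfl
  | succ N ih =>
      have hdef : maxS T g (N+1) ω = max (maxS T g N ω) (bSum T g (N+1) ω) := rfl
      rcases max_cases (maxS T g N ω) (bSum T g (N+1) ω) with ⟨h1, _⟩ | ⟨h1, _⟩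
      · rcases ih with h | ⟨n, h1', h2', h3'⟩
        · left; rw [hdef, h1, h]
        · right; exact ⟨n, h1', Nat.le_succ_of_le h2', by rw [hdef, h1, h3']⟩
      · right; exact ⟨N+1, Nat.succ_le_succ (Nat.zero_le N), le_refl _, by rw [hdef, h1]⟩

lemma maxS_key (N : ℕ) (ω : Ω) (h : 0 < maxS T g N ω) :
    maxS T g N ω ≤ g ω + maxS T g N (T ω) := by
  rcases maxS_cases (T := T) (g := g) N ω with h0 | ⟨n, h1, h2, h3⟩
  · rw [h0] at h; exact absurd h (lt_irrefl 0)
  · rw [h3]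
    obtain ⟨m, rfl⟩ : ∃ m, n = m + 1 := ⟨n - 1, by omega⟩
    rw [bSum_succ']
    have hm : m ≤ N := by omega
    exact add_le_add (le_refl _) (bSum_le_maxS hm (T ω))

lemma measurable_bSum (hT : Measurable T) (hg : Measurable g) (n : ℕ) :
    Measurable (bSum T g n) := by
  unfold bSum
  exact Finset.measurable_sum _ fun j _ => hg.comp (hT.iterate j)

lemma measurable_maxS (hT : Measurable T) (hg : Measurable g) (N : ℕ) :
    Measurable (maxS T g N) := by
  induction N with
  | zero => exact measurable_const
  | succ N ih => exact ih.max (measurable_bSum hT hg (N+1))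

lemma abs_bSum_le {C : ℝ} (hb : ∀ ω, |g ω| ≤ C) (n : ℕ) (ω : Ω) : |bSum T g n ω| ≤ n * C := by
  unfold bSum
  calc |∑ j ∈ Finset.range n, g (T^[j] ω)| ≤ ∑ j ∈ Finset.range n, |g (T^[j] ω)| :=
        Finset.abs_sum_le_sum_abs _ _
    _ ≤ ∑ _j ∈ Finset.range n, C := Finset.sum_le_sum fun j _ => hb _
    _ = n * C := by simp [Finset.sum_const, Finset.card_range, nsmul_eq_mul]

lemma maxS_le {C : ℝ} (hC0 : 0 ≤ C) (hb : ∀ ω, |g ω| ≤ C) (N : ℕ) (ω : Ω) :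
    maxS T g N ω ≤ N * C := by
  induction N with
  | zero => simp [maxS]
  | succ N ih =>
      apply max_le
      · calc maxS T g N ω ≤ N * C := ih
          _ ≤ ((N:ℝ)+1) * C := by nlinarith
          _ = ((N+1 : ℕ) : ℝ) * C := by push_cast; ring
      · calc bSum T g (N+1) ω ≤ |bSum T g (N+1) ω| := le_abs_self _
          _ ≤ ((N+1:ℕ):ℝ) * C := abs_bSum_le hb (N+1) ω

lemma integrable_of_bdd {h : Ω → ℝ} (hm : Measurable h) {C : ℝ} (hb : ∀ ω, |h ω| ≤ C) :
    Integrable h ℙ :=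
  (integrable_const C).mono' hm.aestronglyMeasurable (ae_of_all _ fun ω => by
    simpa [Real.norm_eq_abs] using hb ω)

lemma integral_comp_mpres (hT : MeasurePreserving T ℙ ℙ) {h : Ω → ℝ}
    (hm : AEStronglyMeasurable h ℙ) : ∫ ω, h (T ω) ∂ℙ = ∫ ω, h ω ∂ℙ := by
  rw [← MeasureTheory.integral_map hT.measurable.aemeasurable
    (by rw [hT.map_eq]; exact hm), hT.map_eq]

/-- **Garsia's maximal ergodic theorem**. -/
lemma maximal_ergodic (hT : MeasurePreserving T ℙ ℙ) (hg : Measurable g) {C : ℝ}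
    (hC0 : 0 ≤ C) (hb : ∀ ω, |g ω| ≤ C) (N : ℕ) :
    0 ≤ ∫ ω in {ω | 0 < maxS T g N ω}, g ω ∂ℙ := by
  set u := maxS T g N with hu
  set A := {ω | 0 < u ω} with hA
  have hmu : Measurable u := measurable_maxS hT.measurable hg N
  have hmA : MeasurableSet A := measurableSet_lt measurable_const hmu
  have hub : ∀ ω, |u ω| ≤ N * C := fun ω => by
    rw [abs_of_nonneg (maxS_nonneg N ω)]; exact maxS_le hC0 hb N ω
  have hiu : Integrable u ℙ := integrable_of_bdd hmu hub
  have hiuT : Integrable (fun ω => u (T ω)) ℙ :=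
    integrable_of_bdd (hmu.comp hT.measurable) (fun ω => hub (T ω))
  have hig : Integrable g ℙ := integrable_of_bdd hg hb
  have step1 : ∫ ω in A, (u ω - u (T ω)) ∂ℙ ≤ ∫ ω in A, g ω ∂ℙ := by
    apply setIntegral_mono_on ((hiu.sub hiuT).integrableOn) (hig.integrableOn) hmA
    intro ω hω
    simp only [Pi.sub_apply]
    have h := maxS_key N ω hω
    linarith
  have step2 : ∫ ω in A, (u ω - u (T ω)) ∂ℙ = ∫ ω in A, u ω ∂ℙ - ∫ ω in A, u (T ω) ∂ℙ :=
    integral_sub hiu.integrableOn hiuT.integrableOn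
  have step3 : ∫ ω in A, u ω ∂ℙ = ∫ ω, u ω ∂ℙ := by
    rw [← integral_add_compl hmA hiu]
    have h : ∫ ω in Aᶜ, u ω ∂ℙ = 0 := by
      rw [setIntegral_congr_fun hmA.compl (g := fun _ => (0:ℝ))]
      · exact integral_zero _ _
      · intro ω hω
        have h1 : ¬ (0 < u ω) := hω
        have h2 := maxS_nonneg (T := T) (g := g) N ω
        exact le_antisymm (not_lt.mp h1) h2
    rw [h, add_zero]
  have step4 : ∫ ω in A, u (T ω) ∂ℙ ≤ ∫ ω, u (T ω) ∂ℙ := by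
    apply setIntegral_le_integral hiuT
    exact ae_of_all _ fun ω => maxS_nonneg N (T ω)
  have step5 : ∫ ω, u (T ω) ∂ℙ = ∫ ω, u ω ∂ℙ := integral_comp_mpres hT hmu.aestronglyMeasurable
  linarith

/-- Almost surely, Birkhoff sums of a bounded measurable function over an ergodic
transformation are eventually bounded above by `c·n` for any `c` exceeding the mean. -/
lemma eventual_birkhoff_le (hErg : Ergodic T ℙ) (hg : Measurable g) {C : ℝ}
    (hC0 : 0 ≤ C) (hb : ∀ ω, |g ω| ≤ C) {c : ℝ} (hc : ∫ ω, g ω ∂ℙ < c) :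
    ∀ᵐ ω ∂ℙ, ∃ N : ℕ, ∀ n ≥ N, bSum T g n ω ≤ c * n := by
  have hT : MeasurePreserving T ℙ ℙ := hErg.toMeasurePreserving
  set c₀ : ℝ := (∫ ω, g ω ∂ℙ + c) / 2 with hc₀
  have hc₀1 : ∫ ω, g ω ∂ℙ < c₀ := by rw [hc₀]; linarith
  have hc₀2 : c₀ < c := by rw [hc₀]; linarith
  set B : Set Ω :=
    ⋂ (k : ℕ), ⋂ (N : ℕ), ⋃ (n : ℕ), ⋃ (_ : N ≤ n),
      {ω | (c₀ - 1/(k+1)) * n < bSum T g n ω} with hB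
  have hmemB : ∀ ω, ω ∈ B ↔ ∀ k N : ℕ, ∃ n, N ≤ n ∧ (c₀ - 1/(k+1:ℝ)) * n < bSum T g n ω := by
    intro ω
    simp only [hB, Set.mem_iInter, Set.mem_iUnion, Set.mem_setOf_eq]
    constructor
    · intro h k N; obtain ⟨n, hn, h2⟩ := h k N; exact ⟨n, hn, h2⟩
    · intro h k N; obtain ⟨n, hn, h2⟩ := h k N; exact ⟨n, hn, h2⟩
  have hmB : MeasurableSet B := by
    apply MeasurableSet.iInter; intro k
    apply MeasurableSet.iInter; intro N
    apply MeasurableSet.iUnion; intro n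
    apply MeasurableSet.iUnion; intro _
    exact measurableSet_lt measurable_const (measurable_bSum hT.measurable hg n)
  have hinv : T ⁻¹' B = B := by
    ext ω
    simp only [Set.mem_preimage, hmemB]
    constructor
    · intro h k N
      have hη : (0:ℝ) < 1/(k+1:ℝ) := by positivity
      set η : ℝ := 1/(k+1:ℝ) with hηdef
      have hηhalf : 1/(2*k+2:ℝ) = η/2 := by rw [hηdef]; field_simp
      obtain ⟨M, hM⟩ := exists_nat_ge ((C + |c₀| + 1) / (η/2))
      have hMul : C + |c₀| + 1 ≤ (η/2) * (M:ℝ) := by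
        rw [div_le_iff₀ (by positivity : (0:ℝ) < η/2)] at hM
        linarith
      obtain ⟨n, hn1, hn2⟩ := h (2*k+1) (max N M)
      have hcast : ((2*k+1:ℕ):ℝ) + 1 = 2*k+2 := by push_cast; ring
      rw [hcast, hηhalf] at hn2
      refine ⟨n+1, le_trans (le_max_left N M) (by omega), ?_⟩
      have hS : bSum T g (n+1) ω = g ω + bSum T g n (T ω) := bSum_succ' n ω
      have hgb := hb ω
      have hnM : (M:ℝ) ≤ n := by exact_mod_cast le_trans (le_max_right N M) hn1
      have hmul2 : (η/2) * (M:ℝ) ≤ (η/2) * n := by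
        apply mul_le_mul_of_nonneg_left hnM (by positivity)
      have habs := neg_abs_le c₀
      have hη1 : η ≤ 1 := by
        rw [hηdef]; rw [div_le_one (by positivity)]; push_cast; linarith
      rw [hS]
      have hc1 : (c₀ - η) * (n+1:ℕ) = (c₀ - η) * n + (c₀ - η) := by push_cast; ring
      rw [hc1]
      have hexp : (c₀ - η/2) * n = (c₀ - η) * n + (η/2) * n := by ring
      rw [hexp] at hn2
      linarith [le_abs_self c₀, neg_abs_le (g ω)]
    · intro h k N
      have hη : (0:ℝ) < 1/(k+1:ℝ) := by positivity
      set η : ℝ := 1/(k+1:ℝ) with hηdef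
      have hηhalf : 1/(2*k+2:ℝ) = η/2 := by rw [hηdef]; field_simp
      obtain ⟨M, hM⟩ := exists_nat_ge ((C + |c₀| + 1) / (η/2))
      have hMul : C + |c₀| + 1 ≤ (η/2) * (M:ℝ) := by
        rw [div_le_iff₀ (by positivity : (0:ℝ) < η/2)] at hM
        linarith
      obtain ⟨n, hn1, hn2⟩ := h (2*k+1) (max (N+1) M)
      have hcast : ((2*k+1:ℕ):ℝ) + 1 = 2*k+2 := by push_cast; ring
      rw [hcast, hηhalf] at hn2
      have hn1' : n ≥ 1 := le_trans (le_trans (Nat.le_add_left 1 N) (le_max_left (N+1) M)) hn1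
      obtain ⟨m, rfl⟩ : ∃ m, n = m + 1 := ⟨n - 1, by omega⟩
      refine ⟨m, by
        have := le_trans (le_max_left (N+1) M) hn1; omega, ?_⟩
      have hS : bSum T g (m+1) ω = g ω + bSum T g m (T ω) := bSum_succ' m ω
      have hgb := hb ω
      have hnM : (M:ℝ) ≤ (m:ℝ)+1 := by exact_mod_cast le_trans (le_max_right (N+1) M) hn1
      have hmul2 : (η/2) * (M:ℝ) ≤ (η/2) * ((m:ℝ)+1) := by
        apply mul_le_mul_of_nonneg_left hnM (by positivity)
      have habs := neg_abs_le c₀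
      have hη1 : η ≤ 1 := by
        rw [hηdef]; rw [div_le_one (by positivity)]; push_cast; linarith
      have hcast2 : ((m+1:ℕ):ℝ) = (m:ℝ)+1 := by push_cast; ring
      rw [hcast2] at hn2
      have hexp2 : (c₀ - η/2) * ((m:ℝ)+1) = (c₀ - η) * m + (c₀ - η) + (η/2)*((m:ℝ)+1) := by
        ring
      rw [hexp2] at hn2
      have hS' : bSum T g m (T ω) = bSum T g (m+1) ω - g ω := by rw [hS]; ring
      have hfin : (c₀ - η) * (m:ℝ) < bSum T g m (T ω) := by
        rw [hS']
        linarith [le_abs_self c₀, neg_abs_le c₀, le_abs_self (g ω)]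
      exact_mod_cast hfin
  rcases hErg.ae_empty_or_univ hmB hinv with hnull | hconull
  · have hae : ∀ᵐ ω ∂ℙ, ω ∉ B := by
      have h0 : ℙ B = 0 := ae_eq_empty.mp hnull
      exact measure_eq_zero_iff_ae_notMem.mp h0
    filter_upwards [hae] with ω hω
    rw [hmemB] at hω
    push_neg at hω
    obtain ⟨k, N, hN⟩ := hω
    refine ⟨N, fun n hn => ?_⟩
    have h1 := hN n hn
    calc bSum T g n ω ≤ (c₀ - 1/(k+1:ℝ)) * n := h1
      _ ≤ c * n := by
          apply mul_le_mul_of_nonneg_right _ (Nat.cast_nonneg n)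
          have h2 : (0:ℝ) < 1/(k+1:ℝ) := by positivity
          linarith
  · exfalso
    obtain ⟨k₀, hk₀⟩ := exists_nat_one_div_lt (show (0:ℝ) < c₀ - ∫ ω, g ω ∂ℙ by linarith)
    set η₀ : ℝ := 1/(k₀+1:ℝ) with hη₀
    set g' : Ω → ℝ := fun ω => g ω - (c₀ - η₀) with hg'
    have hg'm : Measurable g' := hg.sub measurable_const
    have hg'b : ∀ ω, |g' ω| ≤ C + |c₀ - η₀| := fun ω => by
      rw [hg']
      calc |g ω - (c₀ - η₀)| ≤ |g ω| + |c₀ - η₀| := abs_sub _ _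
        _ ≤ C + |c₀ - η₀| := by linarith [hb ω]
    have hC0' : (0:ℝ) ≤ C + |c₀ - η₀| := by positivity
    have hintg' : ∫ ω, g' ω ∂ℙ = ∫ ω, g ω ∂ℙ - (c₀ - η₀) := by
      rw [hg']
      rw [integral_sub (integrable_of_bdd hg hb) (integrable_const _)]
      simp
    have hneg : ∫ ω, g' ω ∂ℙ < 0 := by
      rw [hintg']
      have h : η₀ < c₀ - ∫ ω, g ω ∂ℙ := hk₀
      linarith
    have hbSum' : ∀ (n : ℕ) (ω' : Ω), bSum T g' n ω' = bSum T g n ω' - n * (c₀ - η₀) := by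
      intro n ω'
      rw [hg']
      unfold bSum
      rw [Finset.sum_sub_distrib]
      simp [Finset.sum_const, Finset.card_range, nsmul_eq_mul]; ring
    set A : ℕ → Set Ω := fun N => {ω | 0 < maxS T g' N ω} with hA
    have hmA : ∀ N, MeasurableSet (A N) :=
      fun N => measurableSet_lt measurable_const (measurable_maxS hT.measurable hg'm N)
    have hAmono : Monotone A := by
      apply monotone_nat_of_le_succ
      intro N ω hω
      exact lt_of_lt_of_le hω (maxS_mono N ω)
    have hBsub : B ⊆ ⋃ N, A N := by
      intro ω hω
      rw [hmemB] at hω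
      obtain ⟨n, hn1, hn2⟩ := hω k₀ 1
      rw [Set.mem_iUnion]
      refine ⟨n, ?_⟩
      show 0 < maxS T g' n ω
      have h3 : bSum T g' n ω = bSum T g n ω - n * (c₀ - η₀) := hbSum' n ω
      have h4 : 0 < bSum T g' n ω := by rw [h3]; nlinarith [hn2]
      exact lt_of_lt_of_le h4 (bSum_le_maxS (le_refl n) ω)
    have hUnivAE : (⋃ N, A N) =ᵐ[ℙ] (Set.univ : Set Ω) := by
      rw [ae_eq_univ]
      have h1 : (⋃ N, A N)ᶜ ⊆ Bᶜ := Set.compl_subset_compl.mpr hBsub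
      have h2 : ℙ Bᶜ = 0 := ae_eq_univ.mp hconull
      exact measure_mono_null h1 h2
    have hig' : Integrable g' ℙ := integrable_of_bdd hg'm hg'b
    have htend := tendsto_setIntegral_of_monotone hmA hAmono hig'.integrableOn
    have hlim : ∫ ω in ⋃ N, A N, g' ω ∂ℙ = ∫ ω, g' ω ∂ℙ := by
      rw [setIntegral_congr_set hUnivAE, setIntegral_univ]
    have hge : 0 ≤ ∫ ω in ⋃ N, A N, g' ω ∂ℙ :=
      ge_of_tendsto' htend fun N => maximal_ergodic hT hg'm hC0' hg'b N
    rw [hlim] at hge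
    linarith

end ErgodicAux


section MainAux

open scoped Matrix.Norms.L2Operator

/-- the basic observable: `log(‖Φ_m(E, ω)‖ + 1)` -/
def gpot {Ω : Type*} (T : Ω → Ω) (f : Ω → ℝ) (E : ℝ) (m : ℕ) (ω : Ω) : ℝ :=
  Real.log (‖transfer (fun k => f (T^[k] ω)) m E‖ + 1)

lemma shiftN_pot {Ω : Type*} (T : Ω → Ω) (f : Ω → ℝ) (ω : Ω) (s : ℕ) :
    shiftN s (fun k => f (T^[k] ω)) = fun k => f (T^[k] (T^[s] ω)) := by
  funext k
  simp only [shiftN]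
  rw [← Function.iterate_add_apply]

lemma gpot_iterate {Ω : Type*} (T : Ω → Ω) (f : Ω → ℝ) (E : ℝ) (m : ℕ) (ω : Ω) (s : ℕ) :
    gpot T f E m (T^[s] ω) =
      Real.log (‖transfer (shiftN s (fun k => f (T^[k] ω))) m E‖ + 1) := by
  rw [gpot, shiftN_pot]

end MainAux


set_option maxHeartbeats 1600000 in
/-- Lemma 6, first part: almost surely the derivative of the
discriminant is bounded by `e^{(γ(E)+ε)q}` uniformly on `K`, for large `q`. -/
theorem disc_deriv_bound_ergodic
    {Ω : Type*} [MeasurableSpace Ω] (ℙ : Measure Ω) [IsProbabilityMeasure ℙ]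
    (T : Ω → Ω) (hTbij : Function.Bijective T) (hErg : Ergodic T ℙ)
    (f : Ω → ℝ) (hfm : Measurable f) (hfb : ∃ C, ∀ ω, |f ω| ≤ C)
    (γ : ℝ → ℝ) (hγc : Continuous γ)
    (hγ : ∀ E : ℝ, Tendsto
      (fun q : ℕ => (q : ℝ)⁻¹ *
        ∫ ω, Real.log (opNorm2 (transfer (fun k => f (T^[k] ω)) q E)) ∂ℙ)
      atTop (𝓝 (γ E))) :
    ∀ᵐ ω ∂ℙ, ∀ ε > (0 : ℝ), ∃ q₀ : ℕ, ∀ q > q₀, ∀ E ∈ Kset f,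
      |deriv (fun E' => disc (fun k => f (T^[k] ω)) q E') E| ≤
        Real.exp ((γ E + ε) * q) := by
  classical
  obtain ⟨C, hC⟩ := hfb
  have hTm : Measurable T := hErg.toMeasurePreserving.measurable
  have hne : Nonempty Ω := by
    by_contra hcon
    rw [not_nonempty_iff] at hcon
    have h1 : ℙ Set.univ = 1 := measure_univ
    have h2 : (Set.univ : Set Ω) = ∅ := Set.univ_eq_empty_iff.mpr hcon
    rw [h2] at h1
    simp at h1
  set F : ℝ := ⨆ ω, |f ω| with hFdef
  have hbdd : BddAbove (Set.range fun ω => |f ω|) := ⟨C, by rintro x ⟨ω, rfl⟩; exact hC ω⟩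
  have hFb : ∀ ω, |f ω| ≤ F := fun ω => le_ciSup hbdd ω
  have hF0 : 0 ≤ F := le_trans (abs_nonneg _) (hFb (Classical.arbitrary Ω))
  set R : ℝ := 2*F + 14 with hRdef
  have hR1 : (1:ℝ) ≤ R := by rw [hRdef]; linarith
  have hRpos : (0:ℝ) < R := by linarith
  set C₁ : ℝ := Real.log (R + 1) with hC₁def
  have hC₁0 : 0 ≤ C₁ := Real.log_nonneg (by linarith)
  have hlog2 : (0:ℝ) ≤ Real.log 2 := Real.log_nonneg (by norm_num)
  have hKmem : ∀ E ∈ Kset f, |E| ≤ F + 12 := by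
    intro E hE
    rw [Kset, Set.mem_Icc, ← hFdef] at hE
    rw [abs_le]
    exact ⟨by linarith [hE.1], by linarith [hE.2]⟩
  have hstep : ∀ E : ℝ, |E| ≤ F + 12 → ∀ W : ℕ → ℝ, (∀ k, |W k| ≤ F) →
      ∀ s, ‖Astep (E - W s)‖ ≤ R := by
    intro E hE W hW s
    calc ‖Astep (E - W s)‖ ≤ |E - W s| + 2 := norm_Astep_le _
      _ ≤ |E| + |W s| + 2 := by linarith [abs_sub E (W s)]
      _ ≤ R := by rw [hRdef]; linarith [hW s]
  have hpotm : ∀ k : ℕ, Measurable fun ω => f (T^[k] ω) := fun k => hfm.comp (hTm.iterate k)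
  -- the observable gpot
  have hgm : ∀ (E : ℝ) (m : ℕ), Measurable (gpot T f E m) := by
    intro E m
    have h1 : Measurable fun ω => opNorm2 (transfer ((fun ω k => f (T^[k] ω)) ω) m E) :=
      measurable_opNorm2_transfer _ hpotm m E
    exact Real.measurable_log.comp (h1.add_const 1)
  have hg0 : ∀ E m (ω : Ω), 0 ≤ gpot T f E m ω := fun E m ω => log_norm_transfer_nonneg _ _ _
  have hgb : ∀ E : ℝ, |E| ≤ F + 12 → ∀ m (ω : Ω), gpot T f E m ω ≤ m * C₁ + Real.log 2 := by
    intro E hE m ω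
    exact log_transfer_le_linear _ m E R hR1 (hstep E hE _ (fun k => hFb _))
  have hgabs : ∀ E : ℝ, |E| ≤ F + 12 → ∀ m (ω : Ω), |gpot T f E m ω| ≤ m * C₁ + Real.log 2 := by
    intro E hE m ω
    rw [abs_of_nonneg (hg0 E m ω)]; exact hgb E hE m ω
  have hgint : ∀ E : ℝ, |E| ≤ F+12 → ∀ m : ℕ, Integrable (gpot T f E m) ℙ := fun E hE m =>
    integrable_of_bdd (hgm E m) (hgabs E hE m)
  -- integral comparison
  have hcomp : ∀ E : ℝ, |E| ≤ F + 12 → ∀ m : ℕ,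
      ∫ ω, gpot T f E m ω ∂ℙ ≤
        (∫ ω, Real.log (opNorm2 (transfer (fun k => f (T^[k] ω)) m E)) ∂ℙ) + Real.log 3 := by
    intro E hE m
    have hmb : ∀ ω : Ω, |Real.log (opNorm2 (transfer (fun k => f (T^[k] ω)) m E))| ≤
        m * C₁ + Real.log 2 := by
      intro ω
      apply abs_log_le (half_le_norm_transfer _ m E)
        (mul_nonneg (Nat.cast_nonneg m) hC₁0)
      calc Real.log (‖transfer (fun k => f (T^[k] ω)) m E‖)
          ≤ Real.log (R ^ m) := Real.log_le_log
            (lt_of_lt_of_le (by norm_num) (half_le_norm_transfer _ m E))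
            (norm_transfer_le _ m E R hR1 (hstep E hE _ (fun k => hFb _)))
        _ = m * Real.log R := by rw [Real.log_pow]
        _ ≤ m * C₁ := by
            apply mul_le_mul_of_nonneg_left _ (Nat.cast_nonneg m)
            exact Real.log_le_log hRpos (by linarith)
    have hintlog : Integrable
        (fun ω => Real.log (opNorm2 (transfer (fun k => f (T^[k] ω)) m E))) ℙ :=
      integrable_of_bdd (Real.measurable_log.comp
        (measurable_opNorm2_transfer (fun ω k => f (T^[k] ω)) hpotm m E)) hmb
    have hpt : ∀ ω : Ω, gpot T f E m ω ≤
        Real.log (opNorm2 (transfer (fun k => f (T^[k] ω)) m E)) + Real.log 3 :=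
      fun ω => log1p_le_log_add_log3 (half_le_norm_transfer _ m E)
    calc ∫ ω, gpot T f E m ω ∂ℙ
        ≤ ∫ ω, (Real.log (opNorm2 (transfer (fun k => f (T^[k] ω)) m E)) + Real.log 3) ∂ℙ :=
          integral_mono (hgint E hE m) (hintlog.add (integrable_const _)) (fun ω => hpt ω)
      _ = _ := by
          rw [integral_add hintlog (integrable_const _), integral_const]
          simp
  -- the per-ε statement
  have main : ∀ ε : ℝ, 0 < ε → ∀ᵐ ω ∂ℙ, ∃ q₀ : ℕ, ∀ q > q₀, ∀ E ∈ Kset f,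
      |deriv (fun E' => disc (fun k => f (T^[k] ω)) q E') E| ≤ Real.exp ((γ E + ε) * q) := by
    intro ε hε
    -- choice of scale m and radius r per energy
    have hexists : ∀ E₀ : ℝ, ∃ (m : ℕ) (r : ℝ), E₀ ∈ Kset f →
        (1 ≤ m ∧ 0 < r ∧
          (m:ℝ)⁻¹ * (∫ ω, gpot T f E₀ m ω ∂ℙ) ≤ γ E₀ + ε/8 ∧
          R ^ m * r ≤ ε/16 ∧
          ∀ E' : ℝ, |E' - E₀| < r → |γ E' - γ E₀| ≤ ε/16) := by
      intro E₀
      by_cases hE₀ : E₀ ∈ Kset f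
      · have hE₀b : |E₀| ≤ F + 12 := hKmem E₀ hE₀
        have hev1 : ∀ᶠ m : ℕ in atTop,
            (m:ℝ)⁻¹ * ∫ ω, Real.log (opNorm2 (transfer (fun k => f (T^[k] ω)) m E₀)) ∂ℙ
              < γ E₀ + ε/16 :=
          (hγ E₀).eventually (gt_mem_nhds (by linarith))
        have hev2 : ∀ᶠ m : ℕ in atTop, (m:ℝ)⁻¹ * Real.log 3 < ε/16 := by
          have ht : Tendsto (fun m : ℕ => (m:ℝ)⁻¹ * Real.log 3) atTop (𝓝 0) := by
            simpa using tendsto_inv_atTop_nhds_zero_nat.mul_const (Real.log 3)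
          exact ht.eventually (gt_mem_nhds (by linarith))
        have hev3 : ∀ᶠ m : ℕ in atTop, 1 ≤ m := eventually_ge_atTop 1
        obtain ⟨m, hm1, hm2, hm3⟩ := (hev1.and (hev2.and hev3)).exists
        obtain ⟨δ, hδ0, hδ⟩ := Metric.continuousAt_iff.mp hγc.continuousAt (ε/16) (by linarith)
        have hRm : (0:ℝ) < R ^ m := pow_pos hRpos m
        refine ⟨m, min δ (ε/16 * (R ^ m)⁻¹), fun _ => ⟨hm3, ?_, ?_, ?_, ?_⟩⟩
        · have h16 : (0:ℝ) < ε/16 * (R ^ m)⁻¹ :=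
            mul_pos (by linarith) (inv_pos.mpr hRm)
          exact lt_min hδ0 h16
        · have hmpos : (0:ℝ) < m := by exact_mod_cast hm3
          have h1 := hcomp E₀ hE₀b m
          have h2 : (m:ℝ)⁻¹ * ∫ ω, gpot T f E₀ m ω ∂ℙ ≤
              (m:ℝ)⁻¹ * ((∫ ω, Real.log (opNorm2 (transfer (fun k => f (T^[k] ω)) m E₀)) ∂ℙ)
                + Real.log 3) :=
            mul_le_mul_of_nonneg_left h1 (by positivity)
          rw [mul_add] at h2
          linarith [hm1, hm2]
        · calc R ^ m * min δ (ε/16 * (R ^ m)⁻¹) ≤ R ^ m * (ε/16 * (R ^ m)⁻¹) :=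
              mul_le_mul_of_nonneg_left (min_le_right _ _) (le_of_lt hRm)
            _ = ε/16 := by
              rw [show R ^ m * (ε/16 * (R ^ m)⁻¹) = ε/16 * (R^m * (R^m)⁻¹) from by ring,
                mul_inv_cancel₀ (ne_of_gt hRm), mul_one]
        · intro E' hE'
          have h := hδ (show dist E' E₀ < δ by
            rw [Real.dist_eq]; exact lt_of_lt_of_le hE' (min_le_left _ _))
          rw [Real.dist_eq] at h
          exact le_of_lt h
      · exact ⟨1, 1, fun h => absurd h hE₀⟩
    choose mfun rfun hfun using hexists
    -- compact cover
    have hK : IsCompact (Kset f) := isCompact_Icc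
    obtain ⟨t, ht1, ht2⟩ := hK.elim_nhds_subcover (fun E₀ => Metric.ball E₀ (rfun E₀))
      (fun E₀ hE₀ => Metric.ball_mem_nhds _ ((hfun E₀ hE₀).2.1))
    -- a.e. Birkhoff control at the centres
    have hae : ∀ᵐ ω ∂ℙ, ∀ i ∈ t, ∃ N : ℕ, ∀ n ≥ N,
        bSum T (gpot T f i (mfun i)) n ω ≤
          (∫ ω', gpot T f i (mfun i) ω' ∂ℙ + (mfun i) * (ε/16)) * n := by
      rw [Filter.eventually_all_finset]
      intro i hi
      have hiK : i ∈ Kset f := ht1 i hi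
      have hiB : |i| ≤ F + 12 := hKmem i hiK
      have hm1 : 1 ≤ mfun i := (hfun i hiK).1
      have hCnn : (0:ℝ) ≤ (mfun i) * C₁ + Real.log 2 := by
        have h := mul_nonneg (Nat.cast_nonneg (mfun i) : (0:ℝ) ≤ (mfun i:ℝ)) hC₁0
        linarith
      apply eventual_birkhoff_le hErg (hgm i (mfun i)) (C := (mfun i) * C₁ + Real.log 2)
        hCnn (hgabs i hiB (mfun i))
      have hmp : (0:ℝ) < (mfun i : ℝ) := by exact_mod_cast hm1
      have h : (0:ℝ) < (mfun i) * (ε/16) := mul_pos hmp (by linarith)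
      linarith
    -- thresholds
    set Mt : ℕ := t.sup mfun with hMt
    set Bstar : ℝ := 2 * (2 * (Mt:ℝ) * C₁ + 3 * Real.log 2) with hBstar
    have hBstar0 : 0 ≤ Bstar := by
      have h := mul_nonneg (mul_nonneg (by norm_num : (0:ℝ) ≤ 2) (Nat.cast_nonneg Mt)) hC₁0
      rw [hBstar]; linarith
    set ε' : ℝ := ε * (11/16) with hε'
    have hε'0 : 0 < ε' := by rw [hε']; nlinarith
    obtain ⟨q₂, hq₂⟩ := exists_nat_gt ((Bstar + |Real.log (ε'/4)| + 1) / (ε'/2))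
    filter_upwards [hae] with ω hω
    choose! Nfun hN using hω
    refine ⟨max (t.sup Nfun) (q₂ + 1), fun q hq E hE => ?_⟩
    have hqN : t.sup Nfun < q := lt_of_le_of_lt (le_max_left _ _) hq
    have hqq₂ : q₂ + 1 < q := lt_of_le_of_lt (le_max_right _ _) hq
    have hq1 : 1 ≤ q := by omega
    have hqR : (0:ℝ) < q := by exact_mod_cast hq1
    obtain ⟨i, hit, hEb⟩ := Set.mem_iUnion₂.mp (ht2 hE)
    have hiK : i ∈ Kset f := ht1 i hit
    obtain ⟨hm1, hr0, hc3, hc4, hc5⟩ := hfun i hiK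
    set m : ℕ := mfun i with hm
    set V : ℕ → ℝ := fun k => f (T^[k] ω) with hV
    have hVb : ∀ k, |V k| ≤ F := fun k => hFb _
    have hshiftb : ∀ a k, |shiftN a V k| ≤ F := fun a k => hVb _
    have hEK : |E| ≤ F + 12 := hKmem E hE
    have hiB : |i| ≤ F + 12 := hKmem i hiK
    have hEi : |E - i| < rfun i := by
      have h := Metric.mem_ball.mp hEb
      rwa [Real.dist_eq] at h
    have hmpos : (0:ℝ) < m := by exact_mod_cast hm1
    rw [deriv_disc]
    have hB2 : |(dtransfer V q E).trace| ≤ 2 * ‖dtransfer V q E‖ := trace_abs_le _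
    set B₁ : ℝ := 2 * (m:ℝ) * C₁ + 3 * Real.log 2 with hB₁
    have hB₁0 : 0 ≤ B₁ := by
      have h := mul_nonneg (mul_nonneg (by norm_num : (0:ℝ) ≤ 2) (Nat.cast_nonneg m)) hC₁0
      rw [hB₁]; linarith
    set SE : ℝ := ∑ s ∈ Finset.range q, Real.log (‖transfer (shiftN s V) m E‖ + 1) with hSE
    -- per-split-point estimate
    have hterm : ∀ j ∈ Finset.range q,
        ‖transfer (shiftN (j+1) V) (q - (j+1)) E‖ * ‖transfer V j E‖ ≤
          Real.exp ((SE + 2 * m * B₁) / m) := by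
      intro j hj
      have hjq : j < q := Finset.mem_range.mp hj
      have hbot : (m:ℝ) * Real.log (‖transfer V j E‖ + 1) ≤
          (∑ s ∈ Finset.range j, Real.log (‖transfer (shiftN s V) m E‖ + 1)) + m * B₁ := by
        have h := log_transfer_avg V m j E R hm1 hR1 (hstep E hEK V hVb)
        rw [hB₁, hC₁def]
        exact h
      have htop : (m:ℝ) * Real.log (‖transfer (shiftN (j+1) V) (q-(j+1)) E‖ + 1) ≤
          (∑ s ∈ Finset.range (q-(j+1)),
            Real.log (‖transfer (shiftN (s+(j+1)) V) m E‖ + 1)) + m * B₁ := by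
        have h := log_transfer_avg (shiftN (j+1) V) m (q-(j+1)) E R hm1 hR1
          (hstep E hEK _ (hshiftb (j+1)))
        rw [hB₁, hC₁def]
        simpa [shiftN_shiftN] using h
      have hsplit := sum_split_le (fun s => Real.log (‖transfer (shiftN s V) m E‖ + 1))
        (fun s => log_norm_transfer_nonneg _ _ _) hjq
      have hlogle : Real.log (‖transfer (shiftN (j+1) V) (q-(j+1)) E‖ + 1) +
          Real.log (‖transfer V j E‖ + 1) ≤ (SE + 2*m*B₁)/m := by
        rw [le_div_iff₀ hmpos]
        have hsum : (m:ℝ) * (Real.log (‖transfer (shiftN (j+1) V) (q-(j+1)) E‖ + 1) +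
            Real.log (‖transfer V j E‖ + 1)) ≤ SE + 2*m*B₁ := by
          rw [mul_add, hSE]
          linarith
        linarith [hsum]
      have hnn1 : (0:ℝ) ≤ ‖transfer (shiftN (j+1) V) (q-(j+1)) E‖ := norm_nonneg _
      have hnn2 : (0:ℝ) ≤ ‖transfer V j E‖ := norm_nonneg _
      calc ‖transfer (shiftN (j+1) V) (q-(j+1)) E‖ * ‖transfer V j E‖
          ≤ (‖transfer (shiftN (j+1) V) (q-(j+1)) E‖ + 1) * (‖transfer V j E‖ + 1) := by
            nlinarith
        _ = Real.exp (Real.log (‖transfer (shiftN (j+1) V) (q-(j+1)) E‖ + 1) +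
            Real.log (‖transfer V j E‖ + 1)) := by
            rw [Real.exp_add, Real.exp_log (by linarith), Real.exp_log (by linarith)]
        _ ≤ Real.exp ((SE + 2*m*B₁)/m) := Real.exp_le_exp.mpr hlogle
    -- bound SE via Birkhoff sums at the centre
    have hSEle : SE ≤ bSum T (gpot T f i m) q ω + q * ((m:ℝ) * (ε/16)) := by
      rw [hSE]
      have hs : ∀ s ∈ Finset.range q, Real.log (‖transfer (shiftN s V) m E‖ + 1) ≤
          gpot T f i m (T^[s] ω) + (m:ℝ) * (ε/16) := by
        intro s _
        have hlip : Real.log (‖transfer (shiftN s V) m E‖ + 1) ≤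
            Real.log (‖transfer (shiftN s V) m i‖ + 1) + (m:ℝ) * (ε/16) := by
          apply log1p_le_log1p_add (norm_nonneg _) (norm_nonneg _)
            (mul_nonneg (Nat.cast_nonneg m) (by linarith : (0:ℝ) ≤ ε/16))
          have hsub := norm_transfer_sub_le (shiftN s V) m E i R hR1
            (hstep E hEK _ (hshiftb s)) (hstep i hiB _ (hshiftb s))
          have htri : ‖transfer (shiftN s V) m E‖ ≤ ‖transfer (shiftN s V) m i‖ +
              ‖transfer (shiftN s V) m E - transfer (shiftN s V) m i‖ := by
            have h := norm_sub_norm_le (transfer (shiftN s V) m E) (transfer (shiftN s V) m i)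
            linarith
          have hd : (m:ℝ) * R^m * |E - i| ≤ (m:ℝ) * (ε/16) := by
            calc (m:ℝ) * R^m * |E - i| ≤ (m:ℝ) * R^m * rfun i := by
                  apply mul_le_mul_of_nonneg_left (le_of_lt hEi)
                    (mul_nonneg (Nat.cast_nonneg m) (le_of_lt (pow_pos hRpos m)))
              _ = (m:ℝ) * (R^m * rfun i) := by ring
              _ ≤ (m:ℝ) * (ε/16) := mul_le_mul_of_nonneg_left hc4 (le_of_lt hmpos)
          linarith
        have hgid : gpot T f i m (T^[s] ω) =
            Real.log (‖transfer (shiftN s V) m i‖ + 1) := by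
          rw [gpot_iterate T f i m ω s, hV]
        rw [hgid]
        exact hlip
      calc (∑ s ∈ Finset.range q, Real.log (‖transfer (shiftN s V) m E‖ + 1))
          ≤ ∑ s ∈ Finset.range q, (gpot T f i m (T^[s] ω) + (m:ℝ)*(ε/16)) :=
            Finset.sum_le_sum hs
        _ = bSum T (gpot T f i m) q ω + q * ((m:ℝ)*(ε/16)) := by
            rw [Finset.sum_add_distrib, Finset.sum_const, Finset.card_range, nsmul_eq_mul]
            rfl
    -- Birkhoff control
    have hqNi : Nfun i ≤ q := le_trans (Finset.le_sup hit) (le_of_lt hqN)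
    have hbS := hN i hit q hqNi
    -- exponent bound
    have hγi : γ i ≤ γ E + ε/16 := by
      have h := hc5 E hEi
      rcases abs_le.mp h with ⟨h1, h2⟩
      linarith
    have hIle : (∫ ω', gpot T f i m ω' ∂ℙ) ≤ (m:ℝ) * (γ i + ε/8) := by
      have h := mul_le_mul_of_nonneg_left hc3 (le_of_lt hmpos)
      rwa [← mul_assoc, mul_inv_cancel₀ (ne_of_gt hmpos), one_mul] at h
    have hSEm : SE ≤ (m:ℝ) * ((γ E + ε*(5/16)) * q) := by
      have h1 : bSum T (gpot T f i m) q ω ≤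
          ((m:ℝ) * (γ i + ε/8) + (m:ℝ) * (ε/16)) * q := by
        refine le_trans hbS ?_
        apply mul_le_mul_of_nonneg_right _ (le_of_lt hqR)
        linarith [hIle]
      have h2 : ((m:ℝ) * (γ i + ε/8) + (m:ℝ) * (ε/16)) * q + q * ((m:ℝ) * (ε/16)) =
          (m:ℝ) * ((γ i + ε/4) * q) := by ring
      have h3 : (m:ℝ) * ((γ i + ε/4) * q) ≤ (m:ℝ) * ((γ E + ε*(5/16)) * q) := by
        apply mul_le_mul_of_nonneg_left _ (le_of_lt hmpos)
        apply mul_le_mul_of_nonneg_right _ (le_of_lt hqR)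
        linarith
      linarith [hSEle]
    have hmMt : (m:ℝ) ≤ (Mt:ℝ) := by exact_mod_cast Finset.le_sup (f := mfun) hit
    have hBle : 2 * B₁ ≤ Bstar := by
      rw [hB₁, hBstar]
      nlinarith
    have hX : (SE + 2*m*B₁)/m ≤ (γ E + ε*(5/16)) * q + Bstar := by
      rw [div_le_iff₀ hmpos]
      have h1 : 2*(m:ℝ)*B₁ ≤ (m:ℝ) * Bstar := by nlinarith
      nlinarith [hSEm]
    -- sum over split points
    have hsumall : ‖dtransfer V q E‖ ≤ q * Real.exp ((SE + 2*m*B₁)/m) := by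
      refine le_trans (norm_dtransfer_le V q E) ?_
      calc (∑ j ∈ Finset.range q,
            ‖transfer (shiftN (j+1) V) (q - (j+1)) E‖ * ‖transfer V j E‖)
          ≤ ∑ _j ∈ Finset.range q, Real.exp ((SE + 2*m*B₁)/m) := Finset.sum_le_sum hterm
        _ = q * Real.exp ((SE + 2*m*B₁)/m) := by
            rw [Finset.sum_const, Finset.card_range, nsmul_eq_mul]
    -- threshold arithmetic
    have h2q : (0:ℝ) < 2*q := by linarith
    have hlog2q : Real.log (2*(q:ℝ)) + Bstar ≤ ε' * q := by
      have hA : Real.log (2*(q:ℝ)) = Real.log ((ε'/4) * (2*q)) - Real.log (ε'/4) := by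
        rw [Real.log_mul (ne_of_gt (show (0:ℝ) < ε'/4 by linarith)) (ne_of_gt h2q)]
        ring
      have hB : Real.log ((ε'/4)*(2*(q:ℝ))) ≤ (ε'/4)*(2*q) - 1 :=
        Real.log_le_sub_one_of_pos (mul_pos (show (0:ℝ) < ε'/4 by linarith) h2q)
      have hCc : Bstar + |Real.log (ε'/4)| + 1 < q₂ * (ε'/2) :=
        (div_lt_iff₀ (show (0:ℝ) < ε'/2 by linarith)).mp hq₂
      have hq₂q : (q₂:ℝ) + 1 ≤ q := by exact_mod_cast Nat.le_of_lt hqq₂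
      have hq2' : (q₂:ℝ) * (ε'/2) ≤ q * (ε'/2) :=
        mul_le_mul_of_nonneg_right (by linarith) (by linarith)
      have habs := neg_abs_le (Real.log (ε'/4))
      linarith [hA, hB, hCc, hq2', habs]
    -- final chain
    calc |(dtransfer V q E).trace| ≤ 2 * ‖dtransfer V q E‖ := hB2
      _ ≤ 2 * (q * Real.exp ((SE + 2*m*B₁)/m)) := by linarith [hsumall]
      _ = Real.exp (Real.log (2*(q:ℝ)) + (SE + 2*m*B₁)/m) := by
          rw [Real.exp_add, Real.exp_log h2q]
          ring
      _ ≤ Real.exp ((γ E + ε) * q) := by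
          apply Real.exp_le_exp.mpr
          have hring : (γ E + ε) * (q:ℝ) = (γ E + ε*(5/16)) * q + ε' * q := by
            rw [hε']; ring
          rw [hring]
          linarith [hX, hlog2q]
  -- combine over countably many ε
  have hall : ∀ᵐ ω ∂ℙ, ∀ k : ℕ, ∃ q₀ : ℕ, ∀ q > q₀, ∀ E ∈ Kset f,
      |deriv (fun E' => disc (fun k' => f (T^[k'] ω)) q E') E| ≤
        Real.exp ((γ E + 1/(k+1)) * q) :=
    ae_all_iff.mpr fun k => main (1/(k+1)) (by positivity)
  filter_upwards [hall] with ω hω ε hε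
  obtain ⟨k, hk⟩ := exists_nat_one_div_lt hε
  obtain ⟨q₀, hq₀⟩ := hω k
  refine ⟨q₀, fun q hq E hE => ?_⟩
  refine le_trans (hq₀ q hq E hE) (Real.exp_le_exp.mpr ?_)
  apply mul_le_mul_of_nonneg_right _ (Nat.cast_nonneg q)
  have h := le_of_lt hk
  linarith


end
end

section
/- (Floquet characteristic polynomial identity.) Let q ≥ 1 and let V : ℤ_q → ℝ be any function. For every E ∈ ℝ and every κ ∈ ℝ, the characteristic polynomial of the Floquet operator H[κ] satisfies det(E·I − H[κ]) = Tr Φ_q(E) − 2·cos(qκ), where Φ_q(E) = A(E − V(q−1))⋯A(E − V(0)) is the q-step transfer matrix. In particular, det(E·I − H[κ]) is the sum of a polynomial in E independent of κ (the discriminant Δ_q(E) = Tr Φ_q(E)) and the constant −2cos(qκ). -/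
open MeasureTheory Filter Topology Matrix

noncomputable section

def AC (t : ℂ) : Matrix (Fin 2) (Fin 2) ℂ := !![t, -1; 1, 0]

def cm : (ℕ → ℂ) → ℕ → Matrix (Fin 2) (Fin 2) ℂ
  | _, 0 => 1
  | b, n + 1 => cm (fun k => b (k + 1)) n * AC (b 0)

lemma cm_succ_left : ∀ (n : ℕ) (b : ℕ → ℂ), cm b (n + 1) = AC (b n) * cm b n := by
  intro n
  induction n with
  | zero => intro b; show cm _ 0 * AC (b 0) = AC (b 0) * cm b 0
            simp [cm]
  | succ n ih =>
    intro b
    show cm (fun k => b (k+1)) (n+1) * AC (b 0) = AC (b (n+1)) * cm b (n+1)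
    rw [ih, show cm b (n+1) = cm (fun k => b (k+1)) n * AC (b 0) from rfl, Matrix.mul_assoc]

lemma cm_eq_transfer (V : ℕ → ℝ) (E : ℝ) :
    ∀ n, cm (fun k => ((E - V k : ℝ) : ℂ)) n = (transfer V n E).map Complex.ofReal := by
  intro n
  induction n with
  | zero =>
    show (1 : Matrix (Fin 2) (Fin 2) ℂ) = (1 : Matrix (Fin 2) (Fin 2) ℝ).map Complex.ofReal
    ext i j
    simp [Matrix.map_apply, Matrix.one_apply, apply_ite Complex.ofReal]
  | succ n ih =>
    rw [cm_succ_left, ih]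
    show _ = (Astep (E - V n) * transfer V n E).map Complex.ofReal
    rw [show (Astep (E - V n) * transfer V n E).map Complex.ofReal
        = (Astep (E - V n)).map Complex.ofReal * (transfer V n E).map Complex.ofReal from
      Matrix.map_mul (f := Complex.ofRealHom)]
    congr 1
    ext i j
    fin_cases i <;> fin_cases j <;> simp [AC, Astep]

lemma trace_cm (V : ℕ → ℝ) (E : ℝ) (n : ℕ) :
    (cm (fun k => ((E - V k : ℝ) : ℂ)) n).trace = ((disc V n E : ℝ) : ℂ) := by
  rw [cm_eq_transfer, Matrix.trace_fin_two, disc, Matrix.trace_fin_two]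
  simp [Matrix.map_apply]

lemma cm_entry_10 (b : ℕ → ℂ) (n : ℕ) : cm b (n + 1) 1 0 = cm b n 0 0 := by
  rw [cm_succ_left]
  rw [Matrix.mul_apply, Fin.sum_univ_two]
  simp [AC]

lemma cm_entry_01 (b : ℕ → ℂ) (n : ℕ) :
    cm b (n + 1) 0 1 = -(cm (fun k => b (k + 1)) n 0 0) := by
  show (cm (fun k => b (k+1)) n * AC (b 0)) 0 1 = _
  rw [Matrix.mul_apply, Fin.sum_univ_two]
  simp [AC]

lemma cm_entry_11 (b : ℕ → ℂ) (n : ℕ) :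
    cm b (n + 2) 1 1 = -(cm (fun k => b (k + 1)) n 0 0) := by
  show (cm (fun k => b (k+1)) (n+1) * AC (b 0)) 1 1 = _
  rw [Matrix.mul_apply, Fin.sum_univ_two]
  simp [AC, cm_entry_10]

lemma cm_entry_00 (b : ℕ → ℂ) (n : ℕ) :
    cm b (n + 2) 0 0 =
      b 0 * cm (fun k => b (k + 1)) (n + 1) 0 0 - cm (fun k => b (k + 2)) n 0 0 := by
  show (cm (fun k => b (k+1)) (n+1) * AC (b 0)) 0 0 = _
  rw [Matrix.mul_apply, Fin.sum_univ_two]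
  have : cm (fun k => b (k+1)) (n+1) 0 1 = -(cm (fun k => b (k+2)) n 0 0) := cm_entry_01 _ n
  simp [AC, this]
  ring

lemma cm_entry_00_one (b : ℕ → ℂ) : cm b 1 0 0 = b 0 := by
  show (cm _ 0 * AC (b 0)) 0 0 = b 0
  rw [Matrix.mul_apply, Fin.sum_univ_two]
  simp [cm, AC, Matrix.one_apply]


/-- Tridiagonal (Dirichlet) matrix with diagonal `b` and `-1` off-diagonals. -/
def tri (b : ℕ → ℂ) (n : ℕ) : Matrix (Fin n) (Fin n) ℂ :=
  Matrix.of fun i j =>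
    if (i : ℕ) = (j : ℕ) then b i
    else if (i : ℕ) = (j : ℕ) + 1 ∨ (j : ℕ) = (i : ℕ) + 1 then -1 else 0

lemma tri_submatrix_succ (b : ℕ → ℂ) (n : ℕ) :
    (tri b (n + 1)).submatrix Fin.succ Fin.succ = tri (fun k => b (k + 1)) n := by
  ext i j
  simp only [Matrix.submatrix_apply, tri, Matrix.of_apply, Fin.val_succ]
  by_cases h : (i : ℕ) = (j : ℕ)
  · simp [h]
  · rw [if_neg (by omega), if_neg h]
    by_cases h2 : (i : ℕ) = (j : ℕ) + 1 ∨ (j : ℕ) = (i : ℕ) + 1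
    · rw [if_pos (by omega), if_pos h2]
    · rw [if_neg (by omega), if_neg h2]

lemma det_tri : ∀ (n : ℕ) (b : ℕ → ℂ), (tri b n).det = cm b n 0 0 := by
  intro n
  induction n using Nat.twoStepInduction with
  | zero => intro b; simp [tri, cm, Matrix.one_apply, Matrix.det_fin_zero]
  | one =>
    intro b
    rw [Matrix.det_fin_one]
    show tri b 1 0 0 = (cm _ 0 * AC (b 0)) 0 0
    rw [Matrix.mul_apply, Fin.sum_univ_two]
    simp [tri, cm, AC, Matrix.one_apply]
  | more n ih1 ih2 =>
    intro b
    have hcol : ∀ j : Fin n, tri b (n + 2) 0 j.succ.succ = 0 := by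
      intro j
      simp only [tri, Matrix.of_apply, Fin.val_succ, Fin.val_zero]
      split_ifs <;> simp_all <;> omega
    rw [Matrix.det_succ_row_zero, Fin.sum_univ_succ, Fin.sum_univ_succ]
    have htail : (∑ j : Fin n, (-1 : ℂ) ^ ((j.succ.succ : Fin (n+2)) : ℕ) *
        tri b (n + 2) 0 j.succ.succ *
        ((tri b (n+2)).submatrix Fin.succ (j.succ.succ).succAbove).det) = 0 := by
      apply Finset.sum_eq_zero
      intro j _
      rw [hcol]
      ring
    rw [htail, add_zero]
    -- j = 0 term
    have h0 : (0 : Fin (n+2)).succAbove = Fin.succ := Fin.succAbove_zero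
    rw [h0, tri_submatrix_succ]
    -- the j = 1 minor
    have hminor : ((tri b (n+2)).submatrix Fin.succ ((0 : Fin (n+1)).succ).succAbove).det
        = -(tri (fun k => b (k + 2)) n).det := by
      set N := (tri b (n+2)).submatrix Fin.succ ((0 : Fin (n+1)).succ).succAbove with hN
      have hsa0 : ((0 : Fin (n+1)).succ).succAbove (0 : Fin (n+1)) = Fin.castSucc 0 :=
        Fin.succAbove_of_castSucc_lt _ _ Fin.castSucc_lt_succ
      have hN00 : N 0 0 = -1 := by
        simp only [hN, Matrix.submatrix_apply, hsa0]
        simp only [tri, Matrix.of_apply, Fin.val_succ, Fin.coe_castSucc, Fin.castSucc_zero, Fin.val_zero]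
        simp
      have hNi0 : ∀ i : Fin n, N i.succ 0 = 0 := by
        intro i
        simp only [hN, Matrix.submatrix_apply, hsa0]
        simp only [tri, Matrix.of_apply, Fin.val_succ, Fin.coe_castSucc, Fin.val_zero]
        split_ifs <;> simp_all <;> omega
      have hsub : N.submatrix Fin.succ Fin.succ = tri (fun k => b (k + 2)) n := by
        ext i j
        have hsa : ((0 : Fin (n+1)).succ).succAbove j.succ = j.succ.succ := by
          apply Fin.succAbove_of_le_castSucc
          rw [Fin.le_def]
          simp [Fin.val_succ]
        simp only [Matrix.submatrix_apply, hN, hsa]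
        simp only [tri, Matrix.of_apply, Fin.val_succ]
        by_cases h : (i : ℕ) = (j : ℕ)
        · rw [if_pos (by omega), if_pos h]
        · rw [if_neg (by omega), if_neg h]
          by_cases h2 : (i : ℕ) = (j : ℕ) + 1 ∨ (j : ℕ) = (i : ℕ) + 1
          · rw [if_pos (by omega), if_pos h2]
          · rw [if_neg (by omega), if_neg h2]
      rw [Matrix.det_succ_column_zero, Fin.sum_univ_succ]
      have htail2 : (∑ i : Fin n, (-1 : ℂ) ^ ((i.succ : Fin (n+1)) : ℕ) * N i.succ 0 *
          (N.submatrix i.succ.succAbove Fin.succ).det) = 0 := by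
        apply Finset.sum_eq_zero
        intro i _
        rw [hNi0]
        ring
      rw [htail2, add_zero, hN00, Fin.succAbove_zero, hsub]
      simp
    rw [hminor, ih2, ih1]
    have e0 : tri b (n + 2) 0 0 = b 0 := by
      simp [tri]
    have e1 : tri b (n + 2) 0 ((0 : Fin (n+1)).succ) = -1 := by
      simp only [tri, Matrix.of_apply, Fin.val_succ, Fin.val_zero]
      simp
    rw [e0, e1]
    rw [show cm b (n+2) 0 0 = (cm (fun k => b (k+1)) (n+1) * AC (b 0)) 0 0 from rfl,
      Matrix.mul_apply, Fin.sum_univ_two]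
    have h01 : cm (fun k => b (k+1)) (n+1) 0 1 = -(cm (fun k => b (k+2)) n 0 0) := by
      show (cm (fun k => b (k+2)) n * AC (b 1)) 0 1 = _
      rw [Matrix.mul_apply, Fin.sum_univ_two]
      simp [AC]
    rw [h01]
    simp [AC]
    ring


lemma detE1 (b : ℕ → ℂ) (m : ℕ) :
    ((tri b (m+3)).updateRow 0 (Pi.single (Fin.last (m+2)) 1)).det = 1 := by
  set A := (tri b (m+3)).updateRow 0 (Pi.single (Fin.last (m+2)) 1) with hA
  rw [Matrix.det_succ_row_zero]
  rw [Finset.sum_eq_single (Fin.last (m+2))]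
  · have hrow : A 0 (Fin.last (m+2)) = 1 := by
      rw [hA, Matrix.updateRow_self, Pi.single_eq_same]
    rw [hrow, Fin.succAbove_last]
    have hsub : ∀ i j : Fin (m+2), (id j) < (id i) →
        (A.submatrix Fin.succ Fin.castSucc) i j = 0 := by
      intro i j hij
      rw [Matrix.submatrix_apply, hA, Matrix.updateRow_ne (Fin.succ_ne_zero i)]
      have hij' : (j : ℕ) < (i : ℕ) := hij
      simp only [tri, Matrix.of_apply, Fin.val_succ, Fin.coe_castSucc]
      rw [if_neg (by omega), if_neg (by omega)]
    rw [Matrix.det_of_upperTriangular hsub]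
    have hdiag : ∀ i : Fin (m+2), (A.submatrix Fin.succ Fin.castSucc) i i = -1 := by
      intro i
      rw [Matrix.submatrix_apply, hA, Matrix.updateRow_ne (Fin.succ_ne_zero i)]
      simp only [tri, Matrix.of_apply, Fin.val_succ, Fin.coe_castSucc]
      rw [if_neg (by omega), if_pos (by tauto)]
    rw [Finset.prod_congr rfl (fun i _ => hdiag i), Finset.prod_const]
    simp only [Finset.card_univ, Fintype.card_fin, Fin.val_last]
    rw [mul_one, ← mul_pow]
    norm_num
  · intro j _ hj
    have : A 0 j = 0 := by
      rw [hA, Matrix.updateRow_self, Pi.single_eq_of_ne hj]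
    rw [this]; ring
  · intro h; exact absurd (Finset.mem_univ _) h

lemma detE2 (b : ℕ → ℂ) (m : ℕ) :
    ((tri b (m+3)).updateRow (Fin.last (m+2)) (Pi.single 0 1)).det = 1 := by
  set A := (tri b (m+3)).updateRow (Fin.last (m+2)) (Pi.single 0 1) with hA
  rw [Matrix.det_succ_row A (Fin.last (m+2))]
  rw [Finset.sum_eq_single (0 : Fin (m+3))]
  · have hrow : A (Fin.last (m+2)) 0 = 1 := by
      rw [hA, Matrix.updateRow_self, Pi.single_eq_same]
    rw [hrow, Fin.succAbove_last, Fin.succAbove_zero]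
    have hne : ∀ i : Fin (m+2), Fin.castSucc i ≠ Fin.last (m+2) :=
      fun i => Fin.ne_of_lt (Fin.castSucc_lt_last i)
    have hsub : ∀ i j : Fin (m+2), OrderDual.toDual (id j) < OrderDual.toDual (id i) →
        (A.submatrix Fin.castSucc Fin.succ) i j = 0 := by
      intro i j hij
      have hij' : (i : ℕ) < (j : ℕ) := hij
      simp only [id] at hij
      rw [Matrix.submatrix_apply, hA, Matrix.updateRow_ne (hne i)]
      simp only [tri, Matrix.of_apply, Fin.val_succ, Fin.coe_castSucc]
      rw [if_neg (by omega), if_neg (by omega)]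
    rw [Matrix.det_of_lowerTriangular _ hsub]
    have hdiag : ∀ i : Fin (m+2), (A.submatrix Fin.castSucc Fin.succ) i i = -1 := by
      intro i
      rw [Matrix.submatrix_apply, hA, Matrix.updateRow_ne (hne i)]
      simp only [tri, Matrix.of_apply, Fin.val_succ, Fin.coe_castSucc]
      rw [if_neg (by omega), if_pos (by tauto)]
    rw [Finset.prod_congr rfl (fun i _ => hdiag i), Finset.prod_const]
    simp only [Finset.card_univ, Fintype.card_fin, Fin.val_last, Fin.val_zero, add_zero]
    rw [mul_one, ← mul_pow]
    norm_num
  · intro j _ hj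
    have : A (Fin.last (m+2)) j = 0 := by
      rw [hA, Matrix.updateRow_self, Pi.single_eq_of_ne hj]
    rw [this]; ring
  · intro h; exact absurd (Finset.mem_univ _) h

lemma detE3 (b : ℕ → ℂ) (m : ℕ) :
    (((tri b (m+3)).updateRow (Fin.last (m+2)) (Pi.single 0 1)).updateRow 0
        (Pi.single (Fin.last (m+2)) 1)).det
      = -(tri (fun k => b (k+1)) (m+1)).det := by
  set A := ((tri b (m+3)).updateRow (Fin.last (m+2)) (Pi.single 0 1)).updateRow 0
      (Pi.single (Fin.last (m+2)) 1) with hA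
  have hlast_ne : (Fin.last (m+2) : Fin (m+3)) ≠ 0 := Fin.last_pos.ne'
  rw [Matrix.det_succ_row_zero]
  rw [Finset.sum_eq_single (Fin.last (m+2))]
  · have hrow : A 0 (Fin.last (m+2)) = 1 := by
      rw [hA, Matrix.updateRow_self, Pi.single_eq_same]
    rw [hrow, Fin.succAbove_last]
    set S := A.submatrix Fin.succ Fin.castSucc with hS
    have hls : (Fin.last (m+1)).succ = Fin.last (m+2) := rfl
    have hdetS : S.det = (-1)^(m+1) * (tri (fun k => b (k+1)) (m+1)).det := by
      rw [Matrix.det_succ_row S (Fin.last (m+1))]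
      rw [Finset.sum_eq_single (0 : Fin (m+2))]
      · have hrow2 : S (Fin.last (m+1)) 0 = 1 := by
          rw [hS, Matrix.submatrix_apply, hls, Fin.castSucc_zero, hA,
            Matrix.updateRow_ne hlast_ne, Matrix.updateRow_self, Pi.single_eq_same]
        rw [hrow2, Fin.succAbove_last, Fin.succAbove_zero]
        have hsub2 : S.submatrix Fin.castSucc Fin.succ = tri (fun k => b (k+1)) (m+1) := by
          ext i j
          have hrne : (Fin.castSucc i).succ ≠ (0 : Fin (m+3)) := Fin.succ_ne_zero _
          have hrne2 : (Fin.castSucc i).succ ≠ Fin.last (m+2) := by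
            apply Fin.ne_of_val_ne
            simp only [Fin.val_succ, Fin.coe_castSucc, Fin.val_last]
            omega
          rw [Matrix.submatrix_apply, hS, Matrix.submatrix_apply, hA,
            Matrix.updateRow_ne hrne, Matrix.updateRow_ne hrne2]
          simp only [tri, Matrix.of_apply, Fin.val_succ, Fin.coe_castSucc]
          by_cases h : (i : ℕ) = (j : ℕ)
          · rw [if_pos (by omega), if_pos h]
          · rw [if_neg (by omega), if_neg h]
            by_cases h2 : (i : ℕ) = (j : ℕ) + 1 ∨ (j : ℕ) = (i : ℕ) + 1
            · rw [if_pos (by omega), if_pos h2]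
            · rw [if_neg (by omega), if_neg h2]
        rw [hsub2]
        simp only [Fin.val_last, Fin.val_zero, add_zero]
        ring
      · intro j _ hj
        have : S (Fin.last (m+1)) j = 0 := by
          rw [hS, Matrix.submatrix_apply, hls, hA, Matrix.updateRow_ne hlast_ne,
            Matrix.updateRow_self]
          exact Pi.single_eq_of_ne (by simpa [Fin.castSucc_eq_zero_iff] using hj) 1
        rw [this]; ring
      · intro h; exact absurd (Finset.mem_univ _) h
    rw [hdetS]
    simp only [Fin.val_last]
    rw [mul_one, ← mul_assoc, ← pow_add]
    rw [show (m + 2) + (m + 1) = 2 * (m + 1) + 1 by ring]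
    rw [pow_succ, pow_mul]
    norm_num
  · intro j _ hj
    have : A 0 j = 0 := by
      rw [hA, Matrix.updateRow_self, Pi.single_eq_of_ne hj]
    rw [this]; ring
  · intro h; exact absurd (Finset.mem_univ _) h


def zfe (q : ℕ) [NeZero q] : Fin q ≃ ZMod q where
  toFun i := ((i : ℕ) : ZMod q)
  invFun x := ⟨x.val, ZMod.val_lt x⟩
  left_inv i := Fin.ext (ZMod.val_cast_of_lt i.isLt)
  right_inv x := ZMod.natCast_rightInverse x

lemma zmod_succ_iff (m a c : ℕ) (ha : a < m + 3) (hc : c < m + 3) :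
    ((a + 1 : ℕ) : ZMod (m+3)) = ((c : ℕ) : ZMod (m+3)) ↔
      (c = a + 1 ∨ (a = m + 2 ∧ c = 0)) := by
  rw [ZMod.natCast_eq_natCast_iff]
  unfold Nat.ModEq
  rcases Nat.lt_or_ge (a+1) (m+3) with h | h
  · rw [Nat.mod_eq_of_lt h, Nat.mod_eq_of_lt hc]
    omega
  · have ha2 : a = m + 2 := by omega
    subst ha2
    rw [show m + 2 + 1 = m + 3 from rfl, Nat.mod_self, Nat.mod_eq_of_lt hc]
    omega

lemma cond_sub (m : ℕ) (i j : Fin (m+3)) :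
    (zfe (m+3) j = zfe (m+3) i - 1) ↔
      ((i : ℕ) = (j : ℕ) + 1 ∨ ((j : ℕ) = m + 2 ∧ (i : ℕ) = 0)) := by
  rw [eq_sub_iff_add_eq, zfe, Equiv.coe_fn_mk, show ((j : ℕ) : ZMod (m+3)) + 1 = (((j : ℕ) + 1 : ℕ) : ZMod (m+3)) by push_cast; ring]
  exact zmod_succ_iff m j i j.isLt i.isLt

lemma cond_add (m : ℕ) (i j : Fin (m+3)) :
    (zfe (m+3) j = zfe (m+3) i + 1) ↔
      ((j : ℕ) = (i : ℕ) + 1 ∨ ((i : ℕ) = m + 2 ∧ (j : ℕ) = 0)) := by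
  rw [eq_comm, zfe, Equiv.coe_fn_mk, show ((i : ℕ) : ZMod (m+3)) + 1 = (((i : ℕ) + 1 : ℕ) : ZMod (m+3)) by push_cast; ring]
  exact zmod_succ_iff m i j i.isLt j.isLt

lemma cond_eq (q : ℕ) [NeZero q] (i j : Fin q) :
    (zfe q i = zfe q j) ↔ i = j := (zfe q).injective.eq_iff

lemma det_conj_diag (q : ℕ) (g g' : Fin q → ℂ) (h : ∀ i, g i * g' i = 1)
    (X : Matrix (Fin q) (Fin q) ℂ) :
    (Matrix.diagonal g * X * Matrix.diagonal g').det = X.det := by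
  rw [Matrix.det_mul, Matrix.det_mul, Matrix.det_diagonal, Matrix.det_diagonal]
  rw [mul_comm, ← mul_assoc, ← Finset.prod_mul_distrib]
  have : ∀ i ∈ Finset.univ, g' i * g i = 1 := fun i _ => by rw [mul_comm]; exact h i
  rw [Finset.prod_congr rfl this, Finset.prod_const_one, one_mul]

lemma updateRow_comm' (q : ℕ) (T : Matrix (Fin q) (Fin q) ℂ) (i₁ i₂ : Fin q)
    (r₁ r₂ : Fin q → ℂ) (h : i₁ ≠ i₂) :
    (T.updateRow i₁ r₁).updateRow i₂ r₂ = (T.updateRow i₂ r₂).updateRow i₁ r₁ := by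
  ext a c
  rcases eq_or_ne a i₁ with h1 | h1 <;> rcases eq_or_ne a i₂ with h2 | h2
  · exact absurd (h1 ▸ h2 : i₁ = i₂) h
  · subst h1
    rw [Matrix.updateRow_ne h2, Matrix.updateRow_self, Matrix.updateRow_self]
  · subst h2
    rw [Matrix.updateRow_self, Matrix.updateRow_ne (Ne.symm h), Matrix.updateRow_self]
  · rw [Matrix.updateRow_ne h2, Matrix.updateRow_ne h1, Matrix.updateRow_ne h1,
      Matrix.updateRow_ne h2]

/-- Main case: `q = m+3`. -/
lemma floquet_aux (m : ℕ) (V : ZMod (m+3) → ℝ) (E κ : ℝ) :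
    Matrix.det ((E : ℂ) • (1 : Matrix (ZMod (m+3)) (ZMod (m+3)) ℂ) - HqM (m+3) V κ) =
      ((disc (fun k : ℕ => V (k : ZMod (m+3))) (m+3) E : ℝ) : ℂ) -
        (Complex.exp ((((m : ℝ) + 3) * κ : ℝ) * Complex.I) +
         Complex.exp (-((((m : ℝ) + 3) * κ : ℝ) * Complex.I))) := by
  classical
  set z : ℂ := Complex.exp ((((m : ℝ) + 3) * κ : ℝ) * Complex.I) with hz
  set w : ℂ := Complex.exp (-((((m : ℝ) + 3) * κ : ℝ) * Complex.I)) with hw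
  have hzw : z * w = 1 := by
    rw [hz, hw, ← Complex.exp_add]
    ring_nf
    exact Complex.exp_zero
  set b : ℕ → ℂ := fun k => ((E - V ((k : ℕ) : ZMod (m+3)) : ℝ) : ℂ) with hb
  set g : Fin (m+3) → ℂ := fun i => Complex.exp (-((κ : ℂ) * (i : ℕ)) * Complex.I) with hg
  set g' : Fin (m+3) → ℂ := fun i => Complex.exp (((κ : ℂ) * (i : ℕ)) * Complex.I) with hg'
  have hgg : ∀ i, g i * g' i = 1 := by
    intro i
    rw [hg, hg', ← Complex.exp_add]
    ring_nf
    exact Complex.exp_zero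
  set M := (E : ℂ) • (1 : Matrix (ZMod (m+3)) (ZMod (m+3)) ℂ) - HqM (m+3) V κ with hM
  set L : Fin (m+3) := Fin.last (m+2) with hL
  set T := tri b (m+3) with hT
  set Cmat := (T.updateRow 0 (T 0 + (-z) • (Pi.single L 1 : Fin (m+3) → ℂ))).updateRow L
      (T L + (-w) • (Pi.single 0 1 : Fin (m+3) → ℂ)) with hC
  have hL0 : L ≠ 0 := Fin.last_pos.ne'
  -- entrywise identity
  have hgauge : Matrix.diagonal g * (M.submatrix (zfe (m+3)) (zfe (m+3))) * Matrix.diagonal g' = Cmat := by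
    ext i j
    -- RHS entry formula
    have hC_entry : Cmat i j = tri b (m+3) i j
        + (if i = 0 ∧ j = L then -z else 0) + (if i = L ∧ j = 0 then -w else 0) := by
      rcases eq_or_ne i L with hiL | hiL
      · have hi0 : i ≠ 0 := by rw [hiL]; exact hL0
        rw [if_neg (show ¬(i = 0 ∧ j = L) from fun h => hi0 h.1)]
        rw [hC, ← hT, hiL, Matrix.updateRow_self]
        by_cases hj0 : j = 0
        · rw [if_pos ⟨rfl, hj0⟩]
          simp only [Pi.add_apply, Pi.smul_apply, Pi.single_apply, smul_eq_mul]
          rw [if_pos hj0]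
          ring
        · rw [if_neg (show ¬(L = L ∧ j = 0) from fun h => hj0 h.2)]
          simp only [Pi.add_apply, Pi.smul_apply, Pi.single_apply, smul_eq_mul]
          rw [if_neg hj0]
          ring
      · rw [if_neg (show ¬(i = L ∧ j = 0) from fun h => hiL h.1)]
        rcases eq_or_ne i 0 with hi0 | hi0
        · rw [hC, ← hT, hi0, Matrix.updateRow_ne (show (0 : Fin (m+3)) ≠ L from Ne.symm hL0),
            Matrix.updateRow_self]
          by_cases hjL : j = L
          · rw [if_pos ⟨rfl, hjL⟩]
            simp only [Pi.add_apply, Pi.smul_apply, Pi.single_apply, smul_eq_mul]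
            rw [if_pos hjL]
            ring
          · rw [if_neg (show ¬((0 : Fin (m+3)) = 0 ∧ j = L) from fun h => hjL h.2)]
            simp only [Pi.add_apply, Pi.smul_apply, Pi.single_apply, smul_eq_mul]
            rw [if_neg hjL]
            ring
        · rw [if_neg (show ¬(i = 0 ∧ j = L) from fun h => hi0 h.1)]
          rw [hC, ← hT, Matrix.updateRow_ne hiL, Matrix.updateRow_ne hi0]
          ring
    have hLHS : (Matrix.diagonal g * (M.submatrix (zfe (m+3)) (zfe (m+3))) * Matrix.diagonal g') i j
        = g i * M (zfe (m+3) i) (zfe (m+3) j) * g' j := by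
      rw [Matrix.mul_diagonal, Matrix.diagonal_mul, Matrix.submatrix_apply]
    rw [hLHS, hC_entry, hM]
    have hMent : ((E : ℂ) • (1 : Matrix (ZMod (m+3)) (ZMod (m+3)) ℂ) - HqM (m+3) V κ)
          (zfe (m+3) i) (zfe (m+3) j)
        = (if zfe (m+3) i = zfe (m+3) j then (E : ℂ) else 0)
          - ((if zfe (m+3) j = zfe (m+3) i - 1 then Complex.exp ((κ : ℂ) * Complex.I) else 0) +
             (if zfe (m+3) j = zfe (m+3) i + 1 then Complex.exp (-((κ : ℂ) * Complex.I)) else 0) +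
             (if zfe (m+3) j = zfe (m+3) i then ((V (zfe (m+3) i) : ℝ) : ℂ) else 0)) := by
      rw [Matrix.sub_apply, Matrix.smul_apply, Matrix.one_apply, smul_eq_mul]
      rcases eq_or_ne (zfe (m+3) i) (zfe (m+3) j) with h | h
      · rw [if_pos h, if_pos h, mul_one]
        rfl
      · rw [if_neg h, if_neg h, mul_zero]
        rfl
    rw [hMent]
    -- value lemmas for Fin coordinates
    have hvL : (L : ℕ) = m + 2 := rfl
    have hiffL : ∀ a : Fin (m+3), a = L ↔ (a : ℕ) = m + 2 := by
      intro a; rw [Fin.ext_iff, hvL]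
    have hiff0 : ∀ a : Fin (m+3), a = 0 ↔ (a : ℕ) = 0 := by
      intro a; rw [Fin.ext_iff, Fin.val_zero]
    have hexp : ∀ (c : ℂ), g i * c * g' j
        = c * Complex.exp ((((κ : ℂ) * (j : ℕ) - (κ : ℂ) * (i : ℕ))) * Complex.I) := by
      intro c
      rw [hg, hg']
      rw [mul_comm _ c, mul_assoc, ← Complex.exp_add]
      ring_nf
    have htri : tri b (m+3) i j
        = (if (i : ℕ) = (j : ℕ) then b i
           else if (i : ℕ) = (j : ℕ) + 1 ∨ (j : ℕ) = (i : ℕ) + 1 then -1 else 0) := rfl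
    rcases eq_or_ne j i with hd | hd
    · subst hd
      rw [if_pos rfl, if_neg (by rw [cond_sub]; omega), if_neg (by rw [cond_add]; omega),
        if_pos rfl]
      rw [htri, if_pos rfl]
      rw [if_neg (by rw [hiff0, hiffL]; omega), if_neg (by rw [hiffL, hiff0]; omega)]
      rw [hexp, show (((κ : ℂ) * (j : ℕ) - (κ : ℂ) * (j : ℕ))) * Complex.I = 0 by ring,
        Complex.exp_zero, mul_one]
      have hzj : zfe (m+3) j = (((j : ℕ) : ℕ) : ZMod (m+3)) := rfl
      rw [hzj, hb]
      push_cast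
      ring
    · have hne1 : zfe (m+3) i ≠ zfe (m+3) j := fun hcon => hd ((cond_eq (m+3) i j).mp hcon).symm
      have hne2 : zfe (m+3) j ≠ zfe (m+3) i := Ne.symm hne1
      rw [if_neg hne1, if_neg hne2]
      have hdval : (i : ℕ) ≠ (j : ℕ) := fun hcon => hd (Fin.ext hcon.symm)
      have hi3 := i.isLt
      have hj3 := j.isLt
      by_cases hsub : zfe (m+3) j = zfe (m+3) i - 1
      · rw [if_pos hsub]
        have hsub' := (cond_sub m i j).mp hsub
        have hadd : ¬ (zfe (m+3) j = zfe (m+3) i + 1) := by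
          rw [cond_add]
          omega
        rw [if_neg hadd]
        rcases hsub' with hs1 | hs2
        · -- interior subdiagonal : i = j+1
          rw [htri, if_neg hdval, if_pos (Or.inl hs1)]
          rw [if_neg (by rw [hiff0, hiffL]; omega), if_neg (by rw [hiffL, hiff0]; omega)]
          rw [hexp]
          have hic : ((i : ℕ) : ℂ) = ((j : ℕ) : ℂ) + 1 := by
            rw [hs1]; push_cast; ring
          rw [show (((κ : ℂ) * (j : ℕ) - (κ : ℂ) * (i : ℕ))) * Complex.I
              = -((κ : ℂ) * Complex.I) by rw [hic]; ring]
          have h1 : Complex.exp ((κ : ℂ) * Complex.I) *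
              Complex.exp (-((κ : ℂ) * Complex.I)) = 1 := by
            rw [← Complex.exp_add]; simp
          linear_combination -h1
        · -- corner (0, L)
          rw [htri, if_neg hdval, if_neg (by omega)]
          rw [if_pos ⟨(hiff0 i).mpr hs2.2, (hiffL j).mpr hs2.1⟩,
            if_neg (by rw [hiffL, hiff0]; omega)]
          rw [hexp]
          have hic : ((i : ℕ) : ℂ) = 0 := by rw [hs2.2]; push_cast; ring
          have hjc : ((j : ℕ) : ℂ) = ((m : ℕ) : ℂ) + 2 := by rw [hs2.1]; push_cast; ring
          rw [show (((κ : ℂ) * (j : ℕ) - (κ : ℂ) * (i : ℕ))) * Complex.I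
              = ((κ : ℂ) * (((m : ℕ) : ℂ) + 2)) * Complex.I by rw [hic, hjc]; ring]
          have h1 : Complex.exp ((κ : ℂ) * Complex.I) *
              Complex.exp (((κ : ℂ) * (((m : ℕ) : ℂ) + 2)) * Complex.I) = z := by
            rw [hz, ← Complex.exp_add]
            congr 1
            push_cast
            ring
          linear_combination -h1
      · rw [if_neg hsub]
        by_cases hadd : zfe (m+3) j = zfe (m+3) i + 1
        · rw [if_pos hadd]
          rcases (cond_add m i j).mp hadd with ha1 | ha2
          · -- interior superdiagonal : j = i+1
            rw [htri, if_neg hdval, if_pos (Or.inr ha1)]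
            rw [if_neg (by rw [hiff0, hiffL]; omega), if_neg (by rw [hiffL, hiff0]; omega)]
            rw [hexp]
            have hjc : ((j : ℕ) : ℂ) = ((i : ℕ) : ℂ) + 1 := by
              rw [ha1]; push_cast; ring
            rw [show (((κ : ℂ) * (j : ℕ) - (κ : ℂ) * (i : ℕ))) * Complex.I
                = (κ : ℂ) * Complex.I by rw [hjc]; ring]
            have h1 : Complex.exp (-((κ : ℂ) * Complex.I)) *
                Complex.exp ((κ : ℂ) * Complex.I) = 1 := by
              rw [← Complex.exp_add]; simp
            linear_combination -h1
          · -- corner (L, 0)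
            rw [htri, if_neg hdval, if_neg (by omega)]
            rw [if_neg (by rw [hiff0, hiffL]; omega),
              if_pos ⟨(hiffL i).mpr ha2.1, (hiff0 j).mpr ha2.2⟩]
            rw [hexp]
            have hic : ((i : ℕ) : ℂ) = ((m : ℕ) : ℂ) + 2 := by rw [ha2.1]; push_cast; ring
            have hjc : ((j : ℕ) : ℂ) = 0 := by rw [ha2.2]; push_cast; ring
            rw [show (((κ : ℂ) * (j : ℕ) - (κ : ℂ) * (i : ℕ))) * Complex.I
                = -(((κ : ℂ) * (((m : ℕ) : ℂ) + 2)) * Complex.I) by rw [hic, hjc]; ring]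
            have h1 : Complex.exp (-((κ : ℂ) * Complex.I)) *
                Complex.exp (-(((κ : ℂ) * (((m : ℕ) : ℂ) + 2)) * Complex.I)) = w := by
              rw [hw, ← Complex.exp_add]
              congr 1
              push_cast
              ring
            linear_combination -h1
        · rw [if_neg hadd]
          have hns : ¬ ((i : ℕ) = (j : ℕ) + 1) :=
            fun hcon => hsub ((cond_sub m i j).mpr (Or.inl hcon))
          have hna : ¬ ((j : ℕ) = (i : ℕ) + 1) :=
            fun hcon => hadd ((cond_add m i j).mpr (Or.inl hcon))
          have hnc1 : ¬ (i = 0 ∧ j = L) := by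
            rintro ⟨h1, h2⟩
            exact hsub ((cond_sub m i j).mpr (Or.inr ⟨(hiffL j).mp h2, (hiff0 i).mp h1⟩))
          have hnc2 : ¬ (i = L ∧ j = 0) := by
            rintro ⟨h1, h2⟩
            exact hadd ((cond_add m i j).mpr (Or.inr ⟨(hiffL i).mp h1, (hiff0 j).mp h2⟩))
          rw [htri, if_neg hdval, if_neg (by tauto), if_neg hnc1, if_neg hnc2]
          ring
  -- determinant of Cmat
  have hdetC : Cmat.det = ((disc (fun k : ℕ => V (k : ZMod (m+3))) (m+3) E : ℝ) : ℂ) - z - w := by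
    have e0L : (0 : Fin (m+3)) ≠ L := Ne.symm hL0
    have hXL : (T.updateRow 0 (T 0 + (-z) • (Pi.single L 1 : Fin (m+3) → ℂ))) L = T L :=
      Matrix.updateRow_ne hL0
    have h1 : Cmat.det
        = (T.updateRow 0 (T 0 + (-z) • (Pi.single L 1 : Fin (m+3) → ℂ))).det
          + (-w) * ((T.updateRow 0 (T 0 + (-z) • (Pi.single L 1 : Fin (m+3) → ℂ))).updateRow L
              (Pi.single 0 1)).det := by
      rw [hC, Matrix.det_updateRow_add, Matrix.det_updateRow_smul, ← hXL,
        Matrix.updateRow_eq_self]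
    have h2 : (T.updateRow 0 (T 0 + (-z) • (Pi.single L 1 : Fin (m+3) → ℂ))).det
        = T.det + (-z) * (T.updateRow 0 (Pi.single L 1)).det := by
      rw [Matrix.det_updateRow_add, Matrix.det_updateRow_smul, Matrix.updateRow_eq_self]
    have h3 : ((T.updateRow 0 (T 0 + (-z) • (Pi.single L 1 : Fin (m+3) → ℂ))).updateRow L
          (Pi.single 0 1)).det
        = (T.updateRow L (Pi.single 0 1)).det
          + (-z) * ((T.updateRow L (Pi.single 0 1)).updateRow 0 (Pi.single L 1)).det := by
      rw [updateRow_comm' _ T 0 L _ _ e0L]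
      have hrow0 : (T.updateRow L (Pi.single 0 1)) 0 = T 0 := Matrix.updateRow_ne e0L
      rw [Matrix.det_updateRow_add, Matrix.det_updateRow_smul, ← hrow0,
        Matrix.updateRow_eq_self]
    rw [h1, h2, h3, hT, hL, detE1, detE2, detE3, det_tri, det_tri]
    have h11 : cm (fun k => b (k+1)) (m+1) 0 0 = -(cm b (m+3) 1 1) := by
      rw [cm_entry_11 b (m+1)]; ring
    rw [h11]
    have htr := trace_cm (fun k : ℕ => V ((k : ℕ) : ZMod (m+3))) E (m+3)
    rw [Matrix.trace_fin_two] at htr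
    have hbb : (fun k => ((E - (fun k : ℕ => V ((k : ℕ) : ZMod (m+3))) k : ℝ) : ℂ)) = b := rfl
    rw [hbb] at htr
    rw [← htr]
    linear_combination (cm b (m+3) 1 1) * hzw
  calc M.det = (M.submatrix (zfe (m+3)) (zfe (m+3))).det := (Matrix.det_submatrix_equiv_self _ _).symm
    _ = (Matrix.diagonal g * (M.submatrix (zfe (m+3)) (zfe (m+3))) * Matrix.diagonal g').det :=
        (det_conj_diag (m+3) g g' hgg _).symm
    _ = Cmat.det := by rw [hgauge]
    _ = ((disc (fun k : ℕ => V (k : ZMod (m+3))) (m+3) E : ℝ) : ℂ) - z - w := hdetC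
    _ = _ := by ring

/-- the characteristic polynomial of the Floquet operator `H[κ]` is
`det(E·I - H[κ]) = Tr Φ_q(E) - 2 cos(qκ)`. -/
theorem floquet_charpoly (q : ℕ) [NeZero q] (V : ZMod q → ℝ) (E κ : ℝ) :
    Matrix.det ((E : ℂ) • (1 : Matrix (ZMod q) (ZMod q) ℂ) - HqM q V κ) =
      ((disc (fun k : ℕ => V (k : ZMod q)) q E : ℝ) : ℂ) - 2 * Real.cos (q * κ) := by
  rcases q with _ | _ | _ | m
  · exact absurd rfl (NeZero.ne 0)
  · -- q = 1
    show Matrix.det ((E : ℂ) • (1 : Matrix (ZMod 1) (ZMod 1) ℂ) - HqM 1 V κ) =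
      ((disc (fun k : ℕ => V (k : ZMod 1)) 1 E : ℝ) : ℂ) - 2 * Real.cos (((1 : ℕ) : ℝ) * κ)
    haveI : Unique (ZMod 1) := inferInstanceAs (Unique (Fin 1))
    rw [Matrix.det_unique]
    have hent : ∀ x y : ZMod 1, ((E : ℂ) • (1 : Matrix (ZMod 1) (ZMod 1) ℂ) - HqM 1 V κ) x y
        = (E : ℂ) - (Complex.exp ((κ : ℂ) * Complex.I) +
            Complex.exp (-((κ : ℂ) * Complex.I)) + ((V x : ℝ) : ℂ)) := by
      intro x y
      rw [Matrix.sub_apply, Matrix.smul_apply, Matrix.one_apply, if_pos (Subsingleton.elim _ _),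
        smul_eq_mul, mul_one]
      show _ - ((if y = x - 1 then _ else 0) +
        (if y = x + 1 then _ else 0) +
        (if y = x then _ else 0)) = _
      rw [if_pos (Subsingleton.elim _ _), if_pos (Subsingleton.elim _ _),
        if_pos (Subsingleton.elim _ _)]
    rw [hent]
    have hVall : ∀ x : ZMod 1, V x = V ((0 : ℕ) : ZMod 1) :=
      fun x => congrArg V (Subsingleton.elim _ _)
    rw [hVall]
    have hdisc : disc (fun k : ℕ => V (k : ZMod 1)) 1 E = E - V ((0 : ℕ) : ZMod 1) := by
      have h1 : transfer (fun k : ℕ => V (k : ZMod 1)) 1 E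
          = Astep (E - V ((0 : ℕ) : ZMod 1)) * 1 := rfl
      rw [disc, h1, mul_one, Matrix.trace_fin_two]
      simp [Astep]
    rw [hdisc]
    have hcos : 2 * ((Real.cos (((1 : ℕ) : ℝ) * κ) : ℝ) : ℂ)
        = Complex.exp ((κ : ℂ) * Complex.I) + Complex.exp (-((κ : ℂ) * Complex.I)) := by
      rw [show ((1 : ℕ) : ℝ) * κ = κ by push_cast; ring]
      rw [Complex.ofReal_cos, Complex.cos, neg_mul]
      ring
    push_cast
    push_cast at hcos
    linear_combination hcos
  · -- q = 2
    show Matrix.det ((E : ℂ) • (1 : Matrix (ZMod 2) (ZMod 2) ℂ) - HqM 2 V κ) =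
      ((disc (fun k : ℕ => V (k : ZMod 2)) 2 E : ℝ) : ℂ) - 2 * Real.cos (((2 : ℕ) : ℝ) * κ)
    set A := Complex.exp ((κ : ℂ) * Complex.I) with hA
    set B := Complex.exp (-((κ : ℂ) * Complex.I)) with hB
    have hsub := Matrix.det_submatrix_equiv_self (zfe 2)
      ((E : ℂ) • (1 : Matrix (ZMod 2) (ZMod 2) ℂ) - HqM 2 V κ)
    rw [← hsub, Matrix.det_fin_two]
    have z0 : zfe 2 (0 : Fin 2) = (0 : ZMod 2) := by
      show ((0 : ℕ) : ZMod 2) = 0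
      exact Nat.cast_zero
    have z1 : zfe 2 (1 : Fin 2) = (1 : ZMod 2) := by
      show ((1 : ℕ) : ZMod 2) = 1
      exact Nat.cast_one
    have ent : ∀ x y : ZMod 2, ((E : ℂ) • (1 : Matrix (ZMod 2) (ZMod 2) ℂ) - HqM 2 V κ) x y
        = (if x = y then (E : ℂ) else 0) -
          ((if y = x - 1 then A else 0) + (if y = x + 1 then B else 0) +
           (if y = x then ((V x : ℝ) : ℂ) else 0)) := by
      intro x y
      rw [Matrix.sub_apply, Matrix.smul_apply, Matrix.one_apply, smul_eq_mul, mul_ite, mul_one,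
        mul_zero]
      rfl
    have e00 : ((E : ℂ) • (1 : Matrix (ZMod 2) (ZMod 2) ℂ) - HqM 2 V κ) 0 0
        = (E : ℂ) - ((V (0 : ZMod 2) : ℝ) : ℂ) := by
      rw [ent 0 0, if_pos rfl, if_pos rfl,
        if_neg (show ¬((0 : ZMod 2) = 0 - 1) by decide),
        if_neg (show ¬((0 : ZMod 2) = 0 + 1) by decide)]
      ring
    have e11 : ((E : ℂ) • (1 : Matrix (ZMod 2) (ZMod 2) ℂ) - HqM 2 V κ) 1 1
        = (E : ℂ) - ((V (1 : ZMod 2) : ℝ) : ℂ) := by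
      rw [ent 1 1, if_pos rfl, if_pos rfl,
        if_neg (show ¬((1 : ZMod 2) = 1 - 1) by decide),
        if_neg (show ¬((1 : ZMod 2) = 1 + 1) by decide)]
      ring
    have e01 : ((E : ℂ) • (1 : Matrix (ZMod 2) (ZMod 2) ℂ) - HqM 2 V κ) 0 1
        = -(A + B) := by
      rw [ent 0 1, if_neg (show ¬((0 : ZMod 2) = 1) by decide),
        if_pos (show ((1 : ZMod 2) = 0 - 1) by decide),
        if_pos (show ((1 : ZMod 2) = 0 + 1) by decide),
        if_neg (show ¬((1 : ZMod 2) = 0) by decide)]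
      ring
    have e10 : ((E : ℂ) • (1 : Matrix (ZMod 2) (ZMod 2) ℂ) - HqM 2 V κ) 1 0
        = -(A + B) := by
      rw [ent 1 0, if_neg (show ¬((1 : ZMod 2) = 0) by decide),
        if_pos (show ((0 : ZMod 2) = 1 - 1) by decide),
        if_pos (show ((0 : ZMod 2) = 1 + 1) by decide),
        if_neg (show ¬((0 : ZMod 2) = 1) by decide)]
      ring
    simp only [Matrix.submatrix_apply, z0, z1]
    rw [e00, e11, e01, e10]
    have hdisc : disc (fun k : ℕ => V (k : ZMod 2)) 2 E
        = (E - V ((1 : ℕ) : ZMod 2)) * (E - V ((0 : ℕ) : ZMod 2)) - 2 := by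
      have h2 : transfer (fun k : ℕ => V (k : ZMod 2)) 2 E
          = Astep (E - V ((1 : ℕ) : ZMod 2)) * (Astep (E - V ((0 : ℕ) : ZMod 2)) * 1) := rfl
      rw [disc, h2, mul_one, Matrix.trace_fin_two, Matrix.mul_apply, Matrix.mul_apply,
        Fin.sum_univ_two]
      simp [Astep]
      ring
    rw [hdisc]
    have hv0 : ((0 : ℕ) : ZMod 2) = (0 : ZMod 2) := Nat.cast_zero
    have hv1 : ((1 : ℕ) : ZMod 2) = (1 : ZMod 2) := Nat.cast_one
    rw [hv0, hv1]
    have hAA : A * A = Complex.exp ((((2 : ℕ) : ℝ) * κ : ℝ) * Complex.I) := by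
      rw [hA, ← Complex.exp_add]
      congr 1
      push_cast
      ring
    have hBB : B * B = Complex.exp (-((((2 : ℕ) : ℝ) * κ : ℝ) * Complex.I)) := by
      rw [hB, ← Complex.exp_add]
      congr 1
      push_cast
      ring
    have hAB : A * B = 1 := by
      rw [hA, hB, ← Complex.exp_add]
      simp
    have hcos : 2 * ((Real.cos (((2 : ℕ) : ℝ) * κ) : ℝ) : ℂ) = A * A + B * B := by
      rw [Complex.ofReal_cos, Complex.cos, neg_mul, ← hAA, ← hBB]
      ring
    push_cast
    push_cast at hcos
    linear_combination hcos - 2 * hAB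
  · -- q = m + 3
    show Matrix.det ((E : ℂ) • (1 : Matrix (ZMod (m+3)) (ZMod (m+3)) ℂ) - HqM (m+3) V κ) =
      ((disc (fun k : ℕ => V (k : ZMod (m+3))) (m+3) E : ℝ) : ℂ) -
        2 * Real.cos (((m + 3 : ℕ) : ℝ) * κ)
    rw [floquet_aux m V E κ]
    have hcos : 2 * ((Real.cos (((m + 3 : ℕ) : ℝ) * κ) : ℝ) : ℂ)
        = Complex.exp ((((m : ℝ) + 3) * κ : ℝ) * Complex.I) +
          Complex.exp (-((((m : ℝ) + 3) * κ : ℝ) * Complex.I)) := by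
      rw [show ((m + 3 : ℕ) : ℝ) * κ = ((m : ℝ) + 3) * κ by push_cast; ring]
      rw [Complex.ofReal_cos, Complex.cos, neg_mul]
      ring
    push_cast
    push_cast at hcos
    linear_combination hcos

end
end
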